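/- arXiv:0803.1115 — 3 statements merged into one kernel-verified Lean document; each statement's English description precedes it below -/
import Mathlib

section
/- Let (f_i)_{i∈I} be an LK-family and ψ : B⁺ → End(V) the associated LK-representation. Assume: (i) the image of ψ is a left cancellative submonoid of End(V); and (ii) there exist a totally ordered commutative ring 𝔯₀ and a ring homomorphism 𝔯 → 𝔯₀, x ↦ x̄, such that 𝔞̄, 𝔟̄, 𝔠̄, 𝔡̄ are all positive and the image of f_i(e_α) is 0 for every (i,α) ∈ I×Φ⁺. Then ψ is injective. -/
set_option maxRecDepth 4000

namespace LK

/-! ### Coxeter matrices -/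

/-- A Coxeter matrix on an index set `I` (entry `0` encodes `∞`). -/
structure CoxM (I : Type) where
  m : I → I → ℕ
  symm : ∀ i j, m i j = m j i
  one_iff : ∀ i j, m i j = 1 ↔ i = j

variable {I : Type}

/-- A Coxeter matrix is of small type if all its entries belong to `{1,2,3}`. -/
def CoxM.Small (M : CoxM I) : Prop := ∀ i j, M.m i j = 1 ∨ M.m i j = 2 ∨ M.m i j = 3

/-- The alternating word `i j i j ⋯` with `k` letters. -/
def braidList (k : ℕ) (i j : I) : List I :=
  (List.range k).map (fun n => if n % 2 = 0 then i else j)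

/-- The braid word `s_i s_j s_i ⋯` (`k` letters) in the free monoid. -/
def braidWord (k : ℕ) (i j : I) : FreeMonoid I := FreeMonoid.ofList (braidList k i j)

/-- The braid relations defining the Artin–Tits monoid. -/
def artinRel (M : CoxM I) : FreeMonoid I → FreeMonoid I → Prop :=
  fun x y => ∃ i j, M.m i j ≠ 0 ∧ x = braidWord (M.m i j) i j ∧ y = braidWord (M.m i j) j i

/-- The congruence on the free monoid generated by the braid relations. -/
def artinCon (M : CoxM I) : Con (FreeMonoid I) := conGen (artinRel M)

/-- The Artin–Tits monoid `B⁺` of a Coxeter matrix. -/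
def AM (M : CoxM I) := (artinCon M).Quotient

instance (M : CoxM I) : Monoid (AM M) := inferInstanceAs (Monoid (artinCon M).Quotient)

/-- The standard generators of the Artin–Tits monoid. -/
def gen (M : CoxM I) (i : I) : AM M := (artinCon M).mk' (FreeMonoid.of i)

/-- `I(b) = {i ∈ I ∣ s_i ≼ b}`, where `≼` is left divisibility. -/
def IdxSet (M : CoxM I) (x : AM M) : Set I := {i | gen M i ∣ x}

/-- The braid word `s_i s_j s_i ⋯` (`k` letters) in the free group. -/
def braidWordG (k : ℕ) (i j : I) : FreeGroup I := ((braidList k i j).map FreeGroup.of).prod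

/-- The braid relators defining the Artin–Tits group. -/
def artinGRels (M : CoxM I) : Set (FreeGroup I) :=
  {r | ∃ i j, M.m i j ≠ 0 ∧ r = braidWordG (M.m i j) i j * (braidWordG (M.m i j) j i)⁻¹}

/-- The Artin–Tits group `B` of a Coxeter matrix. -/
def AG (M : CoxM I) := PresentedGroup (artinGRels M)

instance (M : CoxM I) : Group (AG M) := inferInstanceAs (Group (PresentedGroup _))

/-- The standard generators of the Artin–Tits group. -/
def ggen (M : CoxM I) (i : I) : AG M := PresentedGroup.of i

/-- The relators defining the Coxeter group. -/
def coxRels (M : CoxM I) : Set (FreeGroup I) :=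
  {r | ∃ i j, M.m i j ≠ 0 ∧ r = (FreeGroup.of i * FreeGroup.of j) ^ (M.m i j)}

/-- The Coxeter group `W` of a Coxeter matrix. -/
def CoxG (M : CoxM I) := PresentedGroup (coxRels M)

instance (M : CoxM I) : Group (CoxG M) := inferInstanceAs (Group (PresentedGroup _))

/-- A Coxeter matrix is spherical if its Coxeter group is finite. -/
def Spherical (M : CoxM I) : Prop := Finite (CoxG M)

/-- Connectedness of the Coxeter graph: there is an edge between `i` and `j`
iff `m i j ∉ {1,2}`. -/
def Connected (M : CoxM I) : Prop :=
  ∀ i j : I, Relation.ReflTransGen (fun a b => M.m a b ≠ 1 ∧ M.m a b ≠ 2) i j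

/-- Restriction of a Coxeter matrix to a subset of the index set. -/
def CoxM.restrictF [DecidableEq I] (M : CoxM I) (J : Finset I) : CoxM {i // i ∈ J} :=
  ⟨fun i j => M.m i j, fun i j => M.symm i j,
   fun i j => (M.one_iff i j).trans (by exact Subtype.coe_inj)⟩

/-- An irreducible affine Coxeter matrix: connected, non-spherical, but every proper
parabolic submatrix is spherical. -/
def Affine [Fintype I] [DecidableEq I] (M : CoxM I) : Prop :=
  Connected M ∧ ¬ Spherical M ∧ ∀ J : Finset I, J ≠ Finset.univ → Spherical (M.restrictF J)

/-! ### The standard root system -/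

section Roots

variable [Fintype I] [DecidableEq I]

/-- The coefficients `-2 cos (π / m i j)` of the standard bilinear form. -/
noncomputable def cf (M : CoxM I) (i j : I) : ℝ := -2 * Real.cos (Real.pi / (M.m i j : ℝ))

/-- The standard symmetric bilinear form `( · | · )` on `E = ⊕ ℝ α_i`. -/
noncomputable def bform (M : CoxM I) (x y : I → ℝ) : ℝ := ∑ i, ∑ j, x i * y j * cf M i j

/-- The simple root `α_i`. -/
def sroot (i : I) : I → ℝ := Pi.single i 1

/-- The simple reflection `s_i` acting on `E`. -/
noncomputable def srefl (M : CoxM I) (i : I) (v : I → ℝ) : I → ℝ :=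
  v - bform M v (sroot i) • sroot i

/-- The roots: the orbit of the simple roots under the reflections. -/
inductive IsRoot (M : CoxM I) : (I → ℝ) → Prop
  | simple (i : I) : IsRoot M (sroot i)
  | srefl (i : I) (v : I → ℝ) : IsRoot M v → IsRoot M (LK.srefl M i v)

/-- The positive roots: roots with nonnegative coordinates. -/
def IsPos (M : CoxM I) (v : I → ℝ) : Prop := IsRoot M v ∧ ∀ i, 0 ≤ v i

/-- The set `Φ⁺` of positive roots, as a type. -/
def Pos (M : CoxM I) := {v : I → ℝ // IsPos M v}

/-- The depth of a positive root: the least number of simple reflections needed to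
send it to a negative vector. -/
noncomputable def dep (M : CoxM I) (v : I → ℝ) : ℕ :=
  sInf {n | ∃ l : List I, l.length = n ∧ ∃ k, l.foldr (srefl M) v k < 0}

theorem isPos_sroot (M : CoxM I) (i : I) : IsPos M (sroot i) :=
  ⟨IsRoot.simple i, fun j => by rw [sroot, Pi.single_apply]; split <;> norm_num⟩

/-- The simple root `α_i` as a positive root. -/
def simplePos (M : CoxM I) (i : I) : Pos M := ⟨sroot i, isPos_sroot M i⟩

/-! ### The Lawrence–Krammer representation -/

variable (M : CoxM I) (R : Type) [CommRing R]

/-- The free module `V` with basis `(e_α)` indexed by the positive roots. -/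
abbrev VV := Pos M →₀ R

/-- The basis vector `e_α` of `V`. -/
noncomputable def ev (α : Pos M) : VV M R := Finsupp.single α 1

open scoped Classical in
/-- The value of the map `φ_i` on the basis vector indexed by `α`. -/
noncomputable def phiAux (a b c d : R) (i : I) (α : Pos M) : VV M R :=
  if α.1 = sroot i then 0
  else if srefl M i α.1 = α.1 then d • ev M R α
  else if h : IsPos M (srefl M i α.1) then
    if dep M α.1 < dep M (srefl M i α.1) then
      a • ev M R α + c • ev M R ⟨srefl M i α.1, h⟩
    else b • ev M R ⟨srefl M i α.1, h⟩
  else 0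

/-- The linear map `φ_i : V → V`. -/
noncomputable def phi (a b c d : R) (i : I) : VV M R →ₗ[R] VV M R :=
  Finsupp.lift (VV M R) R (Pos M) (phiAux M R a b c d i)

/-- The linear map `ψ_i = φ_i + f_i ⊠ e_{α_i}`. -/
noncomputable def psim (a b c d : R) (f : I → (VV M R →ₗ[R] R)) (i : I) :
    VV M R →ₗ[R] VV M R :=
  phi M R a b c d i + (f i).smulRight (ev M R (simplePos M i))

/-- LK-families. -/
structure IsLK (a b c d : R) (f : I → (VV M R →ₗ[R] R)) : Prop where
  diag : ∀ i j, i ≠ j → f i (ev M R (simplePos M j)) = 0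
  rel2 : ∀ i j, M.m i j = 2 → (f i).comp (phi M R a b c d j) = d • f i
  rel3 : ∀ i j, M.m i j = 3 →
    (f i).comp (phi M R a b c d j) = (f j).comp (phi M R a b c d i)

/-- The `R`-module `𝓕` of LK-families. -/
noncomputable def LKFamilies (a b c d : R) : Submodule R (I → (VV M R →ₗ[R] R)) where
  carrier := {f | IsLK M R a b c d f}
  add_mem' := by
    rintro f g ⟨hf1, hf2, hf3⟩ ⟨hg1, hg2, hg3⟩
    refine ⟨fun i j hij => ?_, fun i j hij => ?_, fun i j hij => ?_⟩
    · rw [Pi.add_apply, LinearMap.add_apply, hf1 i j hij, hg1 i j hij, add_zero]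
    · simp only [Pi.add_apply, LinearMap.add_comp, hf2 i j hij, hg2 i j hij, smul_add]
    · simp only [Pi.add_apply, LinearMap.add_comp, hf3 i j hij, hg3 i j hij]
  zero_mem' := by
    refine ⟨fun i j hij => ?_, fun i j hij => ?_, fun i j hij => ?_⟩
    · rw [Pi.zero_apply, LinearMap.zero_apply]
    · simp only [Pi.zero_apply, LinearMap.zero_comp, smul_zero]
    · simp only [Pi.zero_apply, LinearMap.zero_comp]
  smul_mem' := by
    rintro r f ⟨h1, h2, h3⟩
    refine ⟨fun i j hij => ?_, fun i j hij => ?_, fun i j hij => ?_⟩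
    · rw [Pi.smul_apply, LinearMap.smul_apply, h1 i j hij, smul_zero]
    · rw [Pi.smul_apply, LinearMap.smul_comp, h2 i j hij]; exact smul_comm r d (f i)
    · simp only [Pi.smul_apply, LinearMap.smul_comp, h3 i j hij]

end Roots

/-! ### The monoid of binary relations -/

/-- The monoid of binary relations on a set `Ω`, where `β (R * S) α ↔ ∃ γ, β R γ ∧ γ S α`. -/
def Bin (Ω : Type) := Ω → Ω → Prop

instance (Ω : Type) : Monoid (Bin Ω) where
  mul T S := fun x z => ∃ y, T x y ∧ S y z
  one := fun x y => x = y
  mul_assoc T S U := by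
    funext x z
    apply propext
    constructor
    · rintro ⟨y, ⟨u, hTu, hSu⟩, hU⟩; exact ⟨u, hTu, y, hSu, hU⟩
    · rintro ⟨u, hT, y, hS, hU⟩; exact ⟨y, ⟨u, hT, hS⟩, hU⟩
  one_mul T := by
    funext x z
    apply propext
    constructor
    · rintro ⟨y, rfl, h⟩; exact h
    · intro h; exact ⟨x, rfl, h⟩
  mul_one T := by
    funext x z
    apply propext
    constructor
    · rintro ⟨y, h, rfl⟩; exact h
    · intro h; exact ⟨z, h, rfl⟩

/-- `R(Ψ) = {β ∈ Ω ∣ ∃ α ∈ Ψ, β R α}`. -/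
def Bin.image {Ω : Type} (T : Bin Ω) (Ψ : Set Ω) : Set Ω := {x | ∃ y ∈ Ψ, T x y}

/-! ### Further constructions -/

section More

variable [Fintype I] [DecidableEq I]

/-- The map `μ : 𝓕 → 𝔯` in the spherical case. -/
noncomputable def muSph (M : CoxM I) (R : Type) [CommRing R] (a b c d : R) (i0 : I) :
    LKFamilies M R a b c d →ₗ[R] R where
  toFun f := f.1 i0 (ev M R (simplePos M i0))
  map_add' f g := rfl
  map_smul' r f := rfl

/-- A graph automorphism of a Coxeter matrix. -/
def IsAut (M : CoxM I) (g : Equiv.Perm I) : Prop := ∀ i j, M.m (g i) (g j) = M.m i j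

/-- The action of a permutation of `I` on `E = ⊕ ℝ α_i`, sending `α_i` to `α_{g(i)}`. -/
def permE (g : Equiv.Perm I) (v : I → ℝ) : I → ℝ := fun i => v (g.symm i)

open scoped Classical in
/-- The element of `Φ⁺` with given coordinates (junk value if the vector is not
a positive root). -/
noncomputable def posOf (M : CoxM I) [Nonempty I] (v : I → ℝ) : Pos M :=
  if h : IsPos M v then ⟨v, h⟩ else simplePos M (Classical.arbitrary I)

/-- The action of a permutation of `I` on `Φ⁺`. -/
noncomputable def permPos (M : CoxM I) [Nonempty I] (g : Equiv.Perm I) (α : Pos M) : Pos M :=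
  posOf M (permE g α.1)

/-- The action of a permutation of `I` on `V`, permuting the basis `(e_α)`. -/
noncomputable def permV (M : CoxM I) (R : Type) [CommRing R] [Nonempty I] (g : Equiv.Perm I) :
    VV M R →ₗ[R] VV M R :=
  Finsupp.lmapDomain R R (permPos M g)

/-- The submodule `V^G` of fixed points of `V` under a group `G` of permutations of `I`. -/
noncomputable def fixedV (M : CoxM I) (R : Type) [CommRing R] [Nonempty I]
    (G : Subgroup (Equiv.Perm I)) : Submodule R (VV M R) where
  carrier := {v | ∀ g ∈ G, permV M R g v = v}
  add_mem' hx hy g hg := by rw [map_add, hx g hg, hy g hg]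
  zero_mem' g hg := map_zero _
  smul_mem' r v hv g hg := by rw [map_smul, hv g hg]

/-- The submonoid `(B⁺)^G` of fixed points of the Artin–Tits monoid under a group `G`
of permutations of `I` (acting via `actB`). -/
def fixedB (M : CoxM I) (actB : Equiv.Perm I → (AM M →* AM M))
    (G : Subgroup (Equiv.Perm I)) : Submonoid (AM M) where
  carrier := {x | ∀ g ∈ G, actB g x = x}
  one_mem' g hg := map_one _
  mul_mem' hx hy g hg := by rw [map_mul, hx g hg, hy g hg]

/-- The map `μ : 𝓕 → 𝔯^ℕ` in the affine case, defined from the data of the imaginary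
root `δ` and of a pair `(i0, j0)` with `m i0 j0 = 3`. -/
noncomputable def muAff (M : CoxM I) (R : Type) [CommRing R] [Nonempty I] (b c d : R)
    (δ : I → ℝ) (i0 j0 : I) (f : I → (VV M R →ₗ[R] R)) : ℕ → R := fun n =>
  if n % 2 = 0 then f i0 (ev M R (posOf M ((n / 2 : ℕ) • δ + sroot i0)))
  else
    c * d * f i0 (ev M R (posOf M (((n + 1) / 2 : ℕ) • δ - sroot i0)))
      - b * c * f i0 (ev M R (posOf M (((n + 1) / 2 : ℕ) • δ - sroot i0 - sroot j0)))
      - d * d * f j0 (ev M R (posOf M (((n + 1) / 2 : ℕ) • δ - sroot i0 - sroot j0)))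

end More

end LK

namespace LKAux
open LK
variable {I : Type} [Fintype I] [DecidableEq I]

theorem sroot_apply (i k : I) : sroot (I := I) i k = if k = i then 1 else 0 := by
  rw [sroot, Pi.single_apply]

theorem sroot_self (i : I) : sroot (I := I) i i = 1 := by simp [sroot_apply]

theorem sroot_ne (i k : I) (h : k ≠ i) : sroot (I := I) i k = 0 := by simp [sroot_apply, h]

theorem sroot_injective : Function.Injective (sroot (I := I)) := by
  intro i j h
  by_contra hij
  have := congrFun h i
  rw [sroot_self, sroot_ne j i hij] at this
  norm_num at this

theorem cf_self (M : CoxM I) (i : I) : cf M i i = 2 := by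
  have h : M.m i i = 1 := (M.one_iff i i).2 rfl
  rw [cf, h]
  norm_num

theorem cf_two (M : CoxM I) {i j : I} (h : M.m i j = 2) : cf M i j = 0 := by
  rw [cf, h]
  norm_num [Real.cos_pi_div_two]

theorem cf_three (M : CoxM I) {i j : I} (h : M.m i j = 3) : cf M i j = -1 := by
  rw [cf, h]
  norm_num [Real.cos_pi_div_three]

theorem cf_nonpos (M : CoxM I) (hsmall : M.Small) {i k : I} (h : i ≠ k) : cf M i k ≤ 0 := by
  rcases hsmall i k with h1 | h2 | h3
  · exact absurd ((M.one_iff i k).1 h1) h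
  · rw [cf_two M h2]
  · rw [cf_three M h3]; norm_num

theorem sum_sroot_mul (i : I) (g : I → ℝ) : ∑ k, sroot (I := I) i k * g k = g i := by
  rw [Finset.sum_eq_single i]
  · rw [sroot_self, one_mul]
  · intro l _ hl; rw [sroot_ne i l hl, zero_mul]
  · intro h; exact absurd (Finset.mem_univ i) h

theorem bform_sroot (M : CoxM I) (v : I → ℝ) (k : I) :
    bform M v (sroot k) = ∑ i, v i * cf M i k := by
  unfold bform
  refine Finset.sum_congr rfl fun i _ => ?_
  rw [Finset.sum_eq_single k]
  · rw [sroot_self, mul_one]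
  · intro l _ hl; rw [sroot_ne k l hl, mul_zero, zero_mul]
  · intro h; exact absurd (Finset.mem_univ k) h

theorem bform_sroot_sroot (M : CoxM I) (j k : I) :
    bform M (sroot j) (sroot k) = cf M j k := by
  rw [bform_sroot, sum_sroot_mul]

theorem srefl_apply (M : CoxM I) (i : I) (v : I → ℝ) (k : I) :
    srefl M i v k = v k - bform M v (sroot i) * sroot i k := by
  simp [srefl]

theorem srefl_sroot_self (M : CoxM I) (i : I) : srefl M i (sroot i) = -(sroot i) := by
  funext k
  rw [srefl_apply, bform_sroot_sroot, cf_self]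
  simp; ring

theorem srefl_sroot_two (M : CoxM I) {i j : I} (h : M.m i j = 2) :
    srefl M j (sroot i) = sroot i := by
  funext k
  rw [srefl_apply, bform_sroot_sroot, cf_two M h]
  ring

theorem srefl_sroot_three (M : CoxM I) {i j : I} (h : M.m i j = 3) :
    srefl M j (sroot i) = sroot i + sroot j := by
  funext k
  rw [srefl_apply, bform_sroot_sroot, cf_three M h]
  simp

theorem srefl_invol (M : CoxM I) (i : I) (v : I → ℝ) : srefl M i (srefl M i v) = v := by
  have hb : bform M (srefl M i v) (sroot i) = -bform M v (sroot i) := by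
    rw [bform_sroot]
    have : ∀ k, srefl M i v k * cf M k i
        = v k * cf M k i - bform M v (sroot i) * (sroot i k * cf M k i) := by
      intro k; rw [srefl_apply]; ring
    rw [Finset.sum_congr rfl fun k _ => this k, Finset.sum_sub_distrib, ← Finset.mul_sum,
      sum_sroot_mul, ← bform_sroot]
    rw [cf_self]
    ring
  funext k
  rw [srefl_apply, hb, srefl_apply]
  ring


section Gamma
variable (M : CoxM I) {i j : I} (hsmall : M.Small) (hij : i ≠ j) (h3 : M.m i j = 3)

theorem gamma_apply (k : I) : (sroot i + sroot j) k = (if k = i then 1 else 0) + (if k = j then 1 else 0) := by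
  simp [sroot_apply]

include hij h3

theorem isPos_gamma : IsPos M (sroot i + sroot j) := by
  constructor
  · rw [← srefl_sroot_three M h3]
    exact IsRoot.srefl j _ (IsRoot.simple i)
  · intro k
    rw [gamma_apply]
    split <;> split <;> norm_num

theorem gamma_ne_sroot (k : I) : sroot i + sroot j ≠ sroot k := by
  intro h
  by_cases hk : k = i
  · subst hk
    have := congrFun h j
    rw [gamma_apply, sroot_ne k j fun e => hij e.symm] at this
    simp only [if_neg (show j ≠ k from fun e => hij e.symm), if_pos rfl] at this
    norm_num at this
  · have := congrFun h i
    rw [gamma_apply, sroot_ne k i fun e => hk e.symm] at this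
    simp only [if_pos rfl, if_neg hij] at this
    norm_num at this

theorem bform_gamma_i : bform M (sroot i + sroot j) (sroot i) = 1 := by
  rw [bform_sroot]
  have : ∀ k, (sroot i + sroot j) k * cf M k i = sroot i k * cf M k i + sroot j k * cf M k i := by
    intro k; rw [gamma_apply, sroot_apply, sroot_apply]; ring
  rw [Finset.sum_congr rfl fun k _ => this k, Finset.sum_add_distrib, sum_sroot_mul,
    sum_sroot_mul, cf_self, cf_three M (by rw [M.symm]; exact h3)]
  norm_num

theorem bform_gamma_j : bform M (sroot i + sroot j) (sroot j) = 1 := by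
  have := bform_gamma_i M (Ne.symm hij) (by rw [M.symm]; exact h3)
  rwa [show sroot j + sroot i = sroot i + sroot j from add_comm _ _] at this

theorem srefl_i_gamma : srefl M i (sroot i + sroot j) = sroot j := by
  funext k
  rw [srefl_apply, bform_gamma_i M hij h3, gamma_apply, sroot_apply, sroot_apply]
  split_ifs <;> norm_num

theorem srefl_j_gamma : srefl M j (sroot i + sroot j) = sroot i := by
  have := srefl_i_gamma M (Ne.symm hij) (by rw [M.symm]; exact h3)
  rwa [show sroot j + sroot i = sroot i + sroot j from add_comm _ _] at this

include hsmall in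
theorem srefl_gamma_nonneg (k l : I) : 0 ≤ srefl M k (sroot i + sroot j) l := by
  rw [srefl_apply]
  by_cases hlk : l = k
  · subst hlk
    rw [sroot_self, mul_one]
    by_cases hli : l = i
    · subst hli
      rw [bform_gamma_i M hij h3, gamma_apply]
      simp [if_neg hij]
    · by_cases hlj : l = j
      · subst hlj
        rw [bform_gamma_j M hij h3, gamma_apply]
        simp [if_neg (Ne.symm hij)]
      · have hb : bform M (sroot i + sroot j) (sroot l) ≤ 0 := by
          rw [bform_sroot]
          have : ∀ k, (sroot i + sroot j) k * cf M k l
              = sroot i k * cf M k l + sroot j k * cf M k l := by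
            intro k; rw [gamma_apply, sroot_apply, sroot_apply]; ring
          rw [Finset.sum_congr rfl fun k _ => this k, Finset.sum_add_distrib, sum_sroot_mul,
            sum_sroot_mul]
          have h1 := cf_nonpos M hsmall (i := i) (k := l) fun e => hli e.symm
          have h2 := cf_nonpos M hsmall (i := j) (k := l) fun e => hlj e.symm
          linarith
        have hg : 0 ≤ (sroot i + sroot j) l := (isPos_gamma M hij h3).2 l
        linarith
  · rw [sroot_ne k l hlk, mul_zero, sub_zero]
    exact (isPos_gamma M hij h3).2 l

end Gamma

section Dep
variable (M : CoxM I)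

theorem dep_sroot (i : I) : dep M (sroot i) = 1 := by
  have h1 : (1 : ℕ) ∈ {n | ∃ l : List I, l.length = n ∧ ∃ k, l.foldr (srefl M) (sroot i) k < 0} := by
    refine ⟨[i], rfl, i, ?_⟩
    show srefl M i (sroot i) i < 0
    rw [srefl_sroot_self]
    simp [sroot_self]
  have h0 : (0 : ℕ) ∉ {n | ∃ l : List I, l.length = n ∧ ∃ k, l.foldr (srefl M) (sroot i) k < 0} := by
    rintro ⟨l, hl, k, hk⟩
    rw [List.length_eq_zero_iff] at hl
    subst hl
    exact absurd hk (not_lt.2 ((isPos_sroot M i).2 k))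
  have hle := Nat.sInf_le h1
  have hmem := Nat.sInf_mem (⟨1, h1⟩ : Set.Nonempty _)
  have hne : sInf {n | ∃ l : List I, l.length = n ∧ ∃ k, l.foldr (srefl M) (sroot i) k < 0} ≠ 0 := by
    intro e
    rw [e] at hmem
    exact h0 hmem
  show sInf _ = 1
  omega

theorem dep_gamma (hsmall : M.Small) {i j : I} (hij : i ≠ j) (h3 : M.m i j = 3) :
    dep M (sroot i + sroot j) = 2 := by
  set S := {n | ∃ l : List I, l.length = n ∧ ∃ k, l.foldr (srefl M) (sroot i + sroot j) k < 0} with hS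
  have h2 : (2 : ℕ) ∈ S := by
    refine ⟨[j, i], rfl, j, ?_⟩
    show srefl M j (srefl M i (sroot i + sroot j)) j < 0
    rw [srefl_i_gamma M hij h3, srefl_sroot_self]
    simp [sroot_self]
  have h0 : (0 : ℕ) ∉ S := by
    rintro ⟨l, hl, k, hk⟩
    rw [List.length_eq_zero_iff] at hl
    subst hl
    exact absurd hk (not_lt.2 ((isPos_gamma M hij h3).2 k))
  have h1 : (1 : ℕ) ∉ S := by
    rintro ⟨l, hl, k, hk⟩
    rw [List.length_eq_one_iff] at hl
    obtain ⟨a, rfl⟩ := hl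
    exact absurd hk (not_lt.2 (srefl_gamma_nonneg M hsmall hij h3 a k))
  have hle := Nat.sInf_le h2
  have hmem := Nat.sInf_mem (⟨2, h2⟩ : Set.Nonempty S)
  have hne0 : sInf S ≠ 0 := fun e => h0 (e ▸ hmem)
  have hne1 : sInf S ≠ 1 := fun e => h1 (e ▸ hmem)
  show sInf S = 2
  omega

end Dep

section Ent
open scoped Classical
variable {M : CoxM I} {R : Type} [CommRing R]

theorem ev_coord (β γ : Pos M) : (ev M R β) γ = if β = γ then (1:R) else 0 := by
  rw [ev, Finsupp.single_apply]

theorem phi_ev (a b c d : R) (i : I) (α : Pos M) :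
    phi M R a b c d i (ev M R α) = phiAux M R a b c d i α := by
  rw [phi, ev, Finsupp.lift_apply, Finsupp.sum_single_index (by rw [zero_smul]), one_smul]

theorem apply_coord (T : Module.End R (VV M R)) (v : VV M R) (β : Pos M) :
    (T v) β = v.sum fun γ r => r * (T (ev M R γ)) β := by
  conv_lhs => rw [← Finsupp.sum_single v]
  rw [map_finsuppSum, Finsupp.sum_apply]
  refine Finsupp.sum_congr fun γ _ => ?_
  have h : (Finsupp.single γ (v γ)) = v γ • ev M R γ := by
    rw [ev, Finsupp.smul_single', mul_one]
  rw [h, map_smul, Finsupp.smul_apply, smul_eq_mul]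

variable {R0 : Type} [CommRing R0] [LinearOrder R0] [IsStrictOrderedRing R0]

/-- The matrix entry of an endomorphism, pushed to `R0`. -/
noncomputable def ent (pr : R →+* R0) (T : Module.End R (VV M R)) (β α : Pos M) : R0 :=
  pr ((T (ev M R α)) β)

/-- Entrywise nonnegativity. -/
def NN (pr : R →+* R0) (T : Module.End R (VV M R)) : Prop :=
  ∀ β α : Pos M, 0 ≤ ent pr T β α

theorem ent_mul (pr : R →+* R0) (T S : Module.End R (VV M R)) (β α : Pos M) :
    ent pr (T * S) β α
      = ∑ γ ∈ (S (ev M R α)).support, ent pr S γ α * ent pr T β γ := by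
  show pr (((T * S) (ev M R α)) β) = _
  rw [Module.End.mul_apply, apply_coord, Finsupp.sum, map_sum]
  refine Finset.sum_congr rfl fun γ _ => ?_
  rw [map_mul]
  rfl

theorem NN.mul {pr : R →+* R0} {T S : Module.End R (VV M R)} (hT : NN pr T) (hS : NN pr S) :
    NN pr (T * S) := by
  intro β α
  rw [ent_mul]
  exact Finset.sum_nonneg fun γ _ => mul_nonneg (hS γ α) (hT β γ)

theorem ent_mul_le {pr : R →+* R0} {T S : Module.End R (VV M R)} (hT : NN pr T) (hS : NN pr S)
    (β α γ : Pos M) : ent pr S γ α * ent pr T β γ ≤ ent pr (T * S) β α := by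
  rw [ent_mul]
  by_cases hγ : γ ∈ (S (ev M R α)).support
  · exact Finset.single_le_sum (fun x _ => mul_nonneg (hS x α) (hT β x)) hγ
  · have h0 : (S (ev M R α)) γ = 0 := Finsupp.notMem_support_iff.1 hγ
    have : ent pr S γ α = 0 := by rw [ent, h0, map_zero]
    rw [this, zero_mul]
    exact Finset.sum_nonneg fun x _ => mul_nonneg (hS x α) (hT β x)

theorem ent_zero_of_mul {pr : R →+* R0} {T S : Module.End R (VV M R)} (hT : NN pr T)
    (hS : NN pr S) {β α γ : Pos M} (h : ent pr (T * S) β α = 0) (hpos : 0 < ent pr T β γ) :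
    ent pr S γ α = 0 := by
  have hle := ent_mul_le hT hS β α γ
  rw [h] at hle
  have h0 : ent pr S γ α * ent pr T β γ = 0 :=
    le_antisymm hle (mul_nonneg (hS γ α) (hT β γ))
  rcases mul_eq_zero.1 h0 with h' | h'
  · exact h'
  · exact absurd h' (ne_of_gt hpos)

theorem ent_mul_zero_row {pr : R →+* R0} {T S : Module.End R (VV M R)} {β : Pos M}
    (h : ∀ γ, ent pr T β γ = 0) (α : Pos M) : ent pr (T * S) β α = 0 := by
  rw [ent_mul]
  exact Finset.sum_eq_zero fun γ _ => by rw [h γ, mul_zero]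

theorem ent_one (pr : R →+* R0) (β α : Pos M) :
    ent pr (1 : Module.End R (VV M R)) β α = if α = β then 1 else 0 := by
  show pr (((1 : Module.End R (VV M R)) (ev M R α)) β) = _
  rw [Module.End.one_apply, ev_coord]
  split <;> simp

theorem NN.one (pr : R →+* R0) : NN pr (1 : Module.End R (VV M R)) := by
  intro β α
  rw [ent_one]
  split <;> norm_num

end Ent


section PhiEntries
open scoped Classical
variable {M : CoxM I} {R : Type} [CommRing R] (a b c d : R)

theorem phiAux_coord_self (i : I) (γ : Pos M) :
    (phiAux M R a b c d i γ) (simplePos M i) = 0 := by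
  by_cases h1 : γ.1 = sroot i
  · rw [phiAux, if_pos h1, Finsupp.zero_apply]
  have hne : ∀ h' : IsPos M (srefl M i γ.1), (⟨srefl M i γ.1, h'⟩ : Pos M) ≠ simplePos M i := by
    intro h' he
    have hv : srefl M i γ.1 = sroot i := congrArg Subtype.val he
    have hgv : γ.1 = srefl M i (sroot i) := by rw [← hv, srefl_invol]
    rw [srefl_sroot_self] at hgv
    have h2 := γ.2.2 i
    rw [hgv, Pi.neg_apply, sroot_self] at h2
    linarith
  have hγne : γ ≠ simplePos M i := fun he => h1 (congrArg Subtype.val he)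
  by_cases h2 : srefl M i γ.1 = γ.1
  · rw [phiAux, if_neg h1, if_pos h2, Finsupp.smul_apply, ev_coord, if_neg hγne, smul_zero]
  by_cases h3 : IsPos M (srefl M i γ.1)
  · by_cases h4 : dep M γ.1 < dep M (srefl M i γ.1)
    · erw [phiAux, if_neg h1, if_neg h2, dif_pos h3, if_pos h4, Finsupp.add_apply,
        Finsupp.smul_apply, Finsupp.smul_apply, ev_coord, ev_coord,
        if_neg hγne, if_neg (hne h3), smul_zero, smul_zero, add_zero]
    · erw [phiAux, if_neg h1, if_neg h2, dif_pos h3, if_neg h4, Finsupp.smul_apply, ev_coord,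
        if_neg (hne h3), smul_zero]
  · rw [phiAux, if_neg h1, if_neg h2, dif_neg h3, Finsupp.zero_apply]

theorem phiAux_coord_m2 {i j : I} (hij : i ≠ j) (hm : M.m i j = 2) :
    (phiAux M R a b c d j (simplePos M i)) (simplePos M i) = d := by
  have h1 : (simplePos M i).1 ≠ sroot j := fun e => hij (sroot_injective e)
  have h2 : srefl M j (simplePos M i).1 = (simplePos M i).1 := srefl_sroot_two M hm
  rw [phiAux, if_neg h1, if_pos h2, Finsupp.smul_apply, ev_coord, if_pos rfl, smul_eq_mul,
    mul_one]

theorem phiAux_coord_m3_a {i j : I} (hsmall : M.Small) (hij : i ≠ j) (hm : M.m i j = 3) :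
    (phiAux M R a b c d j (simplePos M i)) (simplePos M i) = a := by
  have h1 : (simplePos M i).1 ≠ sroot j := fun e => hij (sroot_injective e)
  have hs : srefl M j (simplePos M i).1 = sroot i + sroot j := srefl_sroot_three M hm
  have h2 : srefl M j (simplePos M i).1 ≠ (simplePos M i).1 := by
    rw [hs]; exact gamma_ne_sroot M hij hm i
  have h3 : IsPos M (srefl M j (simplePos M i).1) := by
    rw [hs]; exact isPos_gamma M hij hm
  have h4 : dep M (simplePos M i).1 < dep M (srefl M j (simplePos M i).1) := by
    show dep M (sroot i) < _
    rw [hs, dep_sroot, dep_gamma M hsmall hij hm]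
    omega
  have hne2 : (⟨srefl M j (simplePos M i).1, h3⟩ : Pos M) ≠ simplePos M i := by
    intro he
    exact (hs ▸ gamma_ne_sroot M hij hm i) (congrArg Subtype.val he)
  erw [phiAux, if_neg h1, if_neg h2, dif_pos h3, if_pos h4, Finsupp.add_apply,
    Finsupp.smul_apply, Finsupp.smul_apply, ev_coord, ev_coord, if_pos rfl,
    if_neg hne2, smul_zero, add_zero, smul_eq_mul, mul_one]

theorem phiAux_coord_m3_b {i j : I} (hsmall : M.Small) (hij : i ≠ j) (hm : M.m i j = 3) :
    (phiAux M R a b c d j (⟨sroot i + sroot j, isPos_gamma M hij hm⟩ : Pos M))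
      (simplePos M i) = b := by
  set g : Pos M := ⟨sroot i + sroot j, isPos_gamma M hij hm⟩ with hg
  have h1 : g.1 ≠ sroot j := gamma_ne_sroot M hij hm j
  have hs : srefl M j g.1 = sroot i := srefl_j_gamma M hij hm
  have h2 : srefl M j g.1 ≠ g.1 := by
    rw [hs]; exact fun e => gamma_ne_sroot M hij hm i e.symm
  have h3 : IsPos M (srefl M j g.1) := by rw [hs]; exact isPos_sroot M i
  have h4 : ¬ dep M g.1 < dep M (srefl M j g.1) := by
    show ¬ dep M (sroot i + sroot j) < _
    rw [hs, dep_sroot, dep_gamma M hsmall hij hm]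
    omega
  have heq : (⟨srefl M j g.1, h3⟩ : Pos M) = simplePos M i := Subtype.ext hs
  erw [phiAux, if_neg h1, if_neg h2, dif_pos h3, if_neg h4, Finsupp.smul_apply, ev_coord,
    if_pos heq, smul_eq_mul, mul_one]

theorem phiAux_coord_m3_c {i j : I} (hsmall : M.Small) (hij : i ≠ j) (hm : M.m i j = 3) :
    (phiAux M R a b c d i (simplePos M j))
      (⟨sroot i + sroot j, isPos_gamma M hij hm⟩ : Pos M) = c := by
  set g : Pos M := ⟨sroot i + sroot j, isPos_gamma M hij hm⟩ with hg
  have h1 : (simplePos M j).1 ≠ sroot i := fun e => hij (sroot_injective e).symm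
  have hs : srefl M i (simplePos M j).1 = sroot i + sroot j := by
    show srefl M i (sroot j) = _
    rw [srefl_sroot_three M (by rw [M.symm]; exact hm), add_comm]
  have h2 : srefl M i (simplePos M j).1 ≠ (simplePos M j).1 := by
    rw [hs]; exact gamma_ne_sroot M hij hm j
  have h3 : IsPos M (srefl M i (simplePos M j).1) := by
    rw [hs]; exact isPos_gamma M hij hm
  have h4 : dep M (simplePos M j).1 < dep M (srefl M i (simplePos M j).1) := by
    show dep M (sroot j) < _
    rw [hs, dep_sroot, dep_gamma M hsmall hij hm]
    omega
  have hne : simplePos M j ≠ g := by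
    intro he
    exact gamma_ne_sroot M hij hm j (congrArg Subtype.val he).symm
  have heq : (⟨srefl M i (simplePos M j).1, h3⟩ : Pos M) = g := Subtype.ext hs
  erw [phiAux, if_neg h1, if_neg h2, dif_pos h3, if_pos h4, Finsupp.add_apply,
    Finsupp.smul_apply, Finsupp.smul_apply, ev_coord, ev_coord, if_neg hne, if_pos heq,
    smul_zero, zero_add, smul_eq_mul, mul_one]

end PhiEntries


section AMside
variable (M : CoxM I)

theorem braidWord_two (i j : I) : braidWord 2 i j = FreeMonoid.of i * FreeMonoid.of j := rfl

theorem braidWord_three (i j : I) :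
    braidWord 3 i j = FreeMonoid.of i * FreeMonoid.of j * FreeMonoid.of i := rfl

theorem artin_rel (i j : I) (h : M.m i j ≠ 0) :
    artinCon M (braidWord (M.m i j) i j) (braidWord (M.m i j) j i) :=
  ConGen.Rel.of _ _ ⟨i, j, h, rfl, rfl⟩

theorem gen_braid2 {i j : I} (h : M.m i j = 2) :
    gen M i * gen M j = gen M j * gen M i := by
  have h' := artin_rel M i j (by rw [h]; norm_num)
  rw [h] at h'
  have e1 : gen M i * gen M j = (artinCon M).mk' (braidWord 2 i j) := rfl
  have e2 : gen M j * gen M i = (artinCon M).mk' (braidWord 2 j i) := rfl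
  rw [e1, e2]
  exact Quotient.sound' h'

theorem gen_braid3 {i j : I} (h : M.m i j = 3) :
    gen M i * gen M j * gen M i = gen M j * gen M i * gen M j := by
  have h' := artin_rel M i j (by rw [h]; norm_num)
  rw [h] at h'
  have e1 : gen M i * gen M j * gen M i = (artinCon M).mk' (braidWord 3 i j) := rfl
  have e2 : gen M j * gen M i * gen M j = (artinCon M).mk' (braidWord 3 j i) := rfl
  rw [e1, e2]
  exact Quotient.sound' h'

/-- Product of generators along a word. -/
def gprod : List I → AM M := fun w => (w.map (gen M)).prod

theorem gprod_nil : gprod M [] = 1 := rfl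

theorem gprod_cons (j : I) (t : List I) : gprod M (j :: t) = gen M j * gprod M t := by
  rw [gprod, List.map_cons, List.prod_cons]
  rfl

theorem mk'_ofList (w : List I) : (artinCon M).mk' (FreeMonoid.ofList w) = gprod M w := by
  induction w with
  | nil => exact map_one _
  | cons j t ih =>
    rw [FreeMonoid.ofList_cons, map_mul, ih, gprod_cons]
    rfl

theorem exists_gprod (x : AM M) : ∃ w : List I, x = gprod M w := by
  obtain ⟨z, rfl⟩ := Con.mk'_surjective (c := artinCon M) x
  exact ⟨z.toList, by rw [← mk'_ofList, FreeMonoid.ofList_toList]⟩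

/-- Word length as a monoid homomorphism on the free monoid. -/
def lenHom : FreeMonoid I →* Multiplicative ℕ where
  toFun w := Multiplicative.ofAdd w.toList.length
  map_one' := rfl
  map_mul' x y := by
    show Multiplicative.ofAdd ((x * y).toList.length) = _
    rw [FreeMonoid.toList_mul, List.length_append]
    rfl

theorem lenHom_braid (k : ℕ) (i j : I) : lenHom (braidWord k i j) = Multiplicative.ofAdd k := by
  show Multiplicative.ofAdd (FreeMonoid.ofList (braidList k i j)).toList.length = _
  rw [FreeMonoid.toList_ofList, braidList, List.length_map, List.length_range]

/-- Word length descends to the Artin--Tits monoid. -/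
def wlen : AM M →* Multiplicative ℕ :=
  Con.lift _ lenHom (Con.conGen_le.2 fun x y h => by
    rcases h with ⟨i, j, hm, rfl, rfl⟩
    show lenHom _ = lenHom _
    rw [lenHom_braid, lenHom_braid])

/-- Word length of an element of the Artin--Tits monoid. -/
def wlenN (x : AM M) : ℕ := Multiplicative.toAdd (wlen M x)

theorem wlenN_mul (x y : AM M) : wlenN M (x * y) = wlenN M x + wlenN M y := by
  rw [wlenN, map_mul]
  rfl

theorem wlenN_gen (i : I) : wlenN M (gen M i) = 1 := rfl

theorem wlenN_gprod (w : List I) : wlenN M (gprod M w) = w.length := by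
  induction w with
  | nil => rfl
  | cons j t ih => rw [gprod_cons, wlenN_mul, wlenN_gen, ih, List.length_cons]; omega

end AMside


section Final
open scoped Classical
variable {M : CoxM I} {R : Type} [CommRing R] {R0 : Type} [CommRing R0] [LinearOrder R0] [IsStrictOrderedRing R0]

theorem psim_coord (a b c d : R) (f : I → (VV M R →ₗ[R] R)) (i : I) (α β : Pos M) :
    (psim M R a b c d f i (ev M R α)) β
      = (phiAux M R a b c d i α) β + f i (ev M R α) * (ev M R (simplePos M i)) β := by
  rw [psim, LinearMap.add_apply, phi_ev, Finsupp.add_apply, LinearMap.smulRight_apply,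
    Finsupp.smul_apply, smul_eq_mul]

theorem ent_psim_self {a b c d : R} {f : I → (VV M R →ₗ[R] R)} (pr : R →+* R0)
    (hzero : ∀ (i : I) (α : Pos M), pr (f i (ev M R α)) = 0) (i : I) (γ : Pos M) :
    ent pr (psim M R a b c d f i) (simplePos M i) γ = 0 := by
  rw [ent, psim_coord, map_add, map_mul, hzero, zero_mul, add_zero, phiAux_coord_self,
    map_zero]

theorem ent_psim_m2 {a b c d : R} {f : I → (VV M R →ₗ[R] R)} (pr : R →+* R0)
    {i j : I} (hij : i ≠ j) (hm : M.m i j = 2) :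
    ent pr (psim M R a b c d f j) (simplePos M i) (simplePos M i) = pr d := by
  have hne : ¬ simplePos M j = simplePos M i :=
    fun e => hij (sroot_injective (congrArg Subtype.val e)).symm
  rw [ent, psim_coord, ev_coord, if_neg hne, mul_zero, add_zero, phiAux_coord_m2 a b c d hij hm]

theorem ent_psim_m3_a {a b c d : R} {f : I → (VV M R →ₗ[R] R)} (pr : R →+* R0)
    (hsmall : M.Small) {i j : I} (hij : i ≠ j) (hm : M.m i j = 3) :
    ent pr (psim M R a b c d f j) (simplePos M i) (simplePos M i) = pr a := by
  have hne : ¬ simplePos M j = simplePos M i :=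
    fun e => hij (sroot_injective (congrArg Subtype.val e)).symm
  rw [ent, psim_coord, ev_coord, if_neg hne, mul_zero, add_zero,
    phiAux_coord_m3_a a b c d hsmall hij hm]

theorem ent_psim_m3_b {a b c d : R} {f : I → (VV M R →ₗ[R] R)} (pr : R →+* R0)
    (hsmall : M.Small) {i j : I} (hij : i ≠ j) (hm : M.m i j = 3) :
    ent pr (psim M R a b c d f j) (simplePos M i)
      (⟨sroot i + sroot j, isPos_gamma M hij hm⟩ : Pos M) = pr b := by
  have hne : ¬ simplePos M j = simplePos M i :=
    fun e => hij (sroot_injective (congrArg Subtype.val e)).symm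
  erw [ent, psim_coord, ev_coord, if_neg hne, mul_zero, add_zero,
    phiAux_coord_m3_b a b c d hsmall hij hm]

theorem ent_psim_m3_c {a b c d : R} {f : I → (VV M R →ₗ[R] R)} (pr : R →+* R0)
    (hsmall : M.Small) {i j : I} (hij : i ≠ j) (hm : M.m i j = 3) :
    ent pr (psim M R a b c d f i)
      (⟨sroot i + sroot j, isPos_gamma M hij hm⟩ : Pos M) (simplePos M j) = pr c := by
  have hne : ¬ simplePos M i = (⟨sroot i + sroot j, isPos_gamma M hij hm⟩ : Pos M) :=
    fun e => gamma_ne_sroot M hij hm i (congrArg Subtype.val e).symm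
  erw [ent, psim_coord, ev_coord, if_neg hne, mul_zero, add_zero,
    phiAux_coord_m3_c a b c d hsmall hij hm]

theorem pr_mul_ite_nonneg (pr : R →+* R0) {x : R} (hx : 0 ≤ pr x) (P : Prop) [Decidable P] :
    0 ≤ pr (x * (if P then (1:R) else 0)) := by
  split_ifs
  · rwa [mul_one]
  · rw [mul_zero, map_zero]

theorem NN_psim {a b c d : R} {f : I → (VV M R →ₗ[R] R)} (pr : R →+* R0)
    (hzero : ∀ (i : I) (α : Pos M), pr (f i (ev M R α)) = 0)
    (ha : 0 ≤ pr a) (hb : 0 ≤ pr b) (hc : 0 ≤ pr c) (hd : 0 ≤ pr d) (i : I) :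
    NN pr (psim M R a b c d f i) := by
  intro β α
  rw [ent, psim_coord, map_add, map_mul, hzero, zero_mul, add_zero, phiAux]
  split_ifs with h1 h2 h3 h4
  · rw [Finsupp.zero_apply, map_zero]
  · rw [Finsupp.smul_apply, ev_coord, smul_eq_mul]
    exact pr_mul_ite_nonneg pr hd _
  · erw [Finsupp.add_apply, Finsupp.smul_apply, Finsupp.smul_apply, ev_coord, ev_coord,
      smul_eq_mul, smul_eq_mul, map_add]
    exact add_nonneg (pr_mul_ite_nonneg pr ha _) (pr_mul_ite_nonneg pr hc _)
  · erw [Finsupp.smul_apply, ev_coord, smul_eq_mul]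
    exact pr_mul_ite_nonneg pr hb _
  · rw [Finsupp.zero_apply, map_zero]

variable {a b c d : R} {f : I → (VV M R →ₗ[R] R)} {psi : AM M →* Module.End R (VV M R)}

theorem NN_psi (pr : R →+* R0)
    (hpsi : ∀ i : I, psi (gen M i) = psim M R a b c d f i)
    (hzero : ∀ (i : I) (α : Pos M), pr (f i (ev M R α)) = 0)
    (ha : 0 ≤ pr a) (hb : 0 ≤ pr b) (hc : 0 ≤ pr c) (hd : 0 ≤ pr d) (x : AM M) :
    NN pr (psi x) := by
  obtain ⟨w, rfl⟩ := exists_gprod M x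
  induction w with
  | nil => rw [gprod_nil, map_one]; exact NN.one pr
  | cons j t ih =>
    rw [gprod_cons, map_mul, hpsi]
    exact NN.mul (NN_psim pr hzero ha hb hc hd j) ih

theorem row0_of_dvd (pr : R →+* R0)
    (hpsi : ∀ i : I, psi (gen M i) = psim M R a b c d f i)
    (hzero : ∀ (i : I) (α : Pos M), pr (f i (ev M R α)) = 0)
    {i : I} {x : AM M} (h : gen M i ∣ x) (α : Pos M) :
    ent pr (psi x) (simplePos M i) α = 0 := by
  obtain ⟨y, rfl⟩ := h
  rw [map_mul, hpsi]
  exact ent_mul_zero_row (fun γ => ent_psim_self pr hzero i γ) α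

theorem key_lemma (pr : R →+* R0) (hsmall : M.Small)
    (hpsi : ∀ i : I, psi (gen M i) = psim M R a b c d f i)
    (hzero : ∀ (i : I) (α : Pos M), pr (f i (ev M R α)) = 0)
    (ha : 0 < pr a) (hb : 0 < pr b) (hc : 0 < pr c) (hd : 0 < pr d) :
    ∀ n : ℕ, ∀ x : AM M, wlenN M x ≤ n →
      ∀ i : I, (∀ α, ent pr (psi x) (simplePos M i) α = 0) → gen M i ∣ x := by
  have hNNp : ∀ k, NN pr (psim M R a b c d f k) :=
    NN_psim pr hzero ha.le hb.le hc.le hd.le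
  have hNN : ∀ z, NN pr (psi z) := NN_psi pr hpsi hzero ha.le hb.le hc.le hd.le
  intro n
  induction n with
  | zero =>
    intro x hx i hrow
    obtain ⟨w, rfl⟩ := exists_gprod M x
    cases w with
    | nil =>
      exfalso
      have h1 := hrow (simplePos M i)
      rw [gprod_nil, map_one, ent_one, if_pos rfl] at h1
      exact one_ne_zero h1
    | cons j t =>
      exfalso
      rw [wlenN_gprod] at hx
      simp at hx
  | succ n IH =>
    intro x hx i hrow
    obtain ⟨w, rfl⟩ := exists_gprod M x
    cases w with
    | nil =>
      exfalso
      have h1 := hrow (simplePos M i)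
      rw [gprod_nil, map_one, ent_one, if_pos rfl] at h1
      exact one_ne_zero h1
    | cons j t =>
      rw [gprod_cons] at hrow hx ⊢
      have hpsix : psi (gen M j * gprod M t) = psim M R a b c d f j * psi (gprod M t) := by
        rw [map_mul, hpsi]
      by_cases hji : j = i
      · subst hji
        exact ⟨gprod M t, rfl⟩
      · have hij : i ≠ j := fun e => hji e.symm
        have hlen : wlenN M (gprod M t) ≤ n := by
          rw [wlenN_mul, wlenN_gen] at hx
          omega
        rcases hsmall i j with h1 | h2 | h3
        · exact absurd ((M.one_iff i j).1 h1) hij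
        · -- m i j = 2
          have hrow' : ∀ α, ent pr (psi (gprod M t)) (simplePos M i) α = 0 := by
            intro α
            refine ent_zero_of_mul (β := simplePos M i) (γ := simplePos M i)
              (hNNp j) (hNN _) ?_ ?_
            · rw [← hpsix]; exact hrow α
            · rw [ent_psim_m2 pr hij h2]; exact hd
          obtain ⟨z, hz⟩ := IH (gprod M t) hlen i hrow'
          refine ⟨gen M j * z, ?_⟩
          rw [hz]
          calc gen M j * (gen M i * z) = gen M j * gen M i * z := by rw [mul_assoc]
            _ = gen M i * gen M j * z := by rw [← gen_braid2 M h2]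
            _ = gen M i * (gen M j * z) := by rw [mul_assoc]
        · -- m i j = 3
          have hrow1 : ∀ α, ent pr (psi (gprod M t)) (simplePos M i) α = 0 := by
            intro α
            refine ent_zero_of_mul (β := simplePos M i) (γ := simplePos M i)
              (hNNp j) (hNN _) ?_ ?_
            · rw [← hpsix]; exact hrow α
            · rw [ent_psim_m3_a pr hsmall hij h3]; exact ha
          have hrow2 : ∀ α, ent pr (psi (gprod M t))
              (⟨sroot i + sroot j, isPos_gamma M hij h3⟩ : Pos M) α = 0 := by
            intro α
            refine ent_zero_of_mul (β := simplePos M i)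
              (γ := (⟨sroot i + sroot j, isPos_gamma M hij h3⟩ : Pos M))
              (hNNp j) (hNN _) ?_ ?_
            · rw [← hpsix]; exact hrow α
            · rw [ent_psim_m3_b pr hsmall hij h3]; exact hb
          obtain ⟨y, hy⟩ := IH (gprod M t) hlen i hrow1
          have hleny : wlenN M y ≤ n := by
            rw [hy, wlenN_mul, wlenN_gen] at hlen
            omega
          have hpsix' : psi (gprod M t) = psim M R a b c d f i * psi y := by
            rw [hy, map_mul, hpsi]
          have hrow3 : ∀ α, ent pr (psi y) (simplePos M j) α = 0 := by
            intro α
            refine ent_zero_of_mul (β := (⟨sroot i + sroot j, isPos_gamma M hij h3⟩ : Pos M))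
              (γ := simplePos M j) (hNNp i) (hNN _) ?_ ?_
            · rw [← hpsix']; exact hrow2 α
            · rw [ent_psim_m3_c pr hsmall hij h3]; exact hc
          obtain ⟨z, hz⟩ := IH y hleny j hrow3
          refine ⟨gen M j * gen M i * z, ?_⟩
          rw [hy, hz]
          calc gen M j * (gen M i * (gen M j * z))
              = gen M j * gen M i * gen M j * z := by simp only [mul_assoc]
            _ = gen M i * gen M j * gen M i * z := by rw [gen_braid3 M h3]
            _ = gen M i * (gen M j * gen M i * z) := by simp only [mul_assoc]

end Final


end LKAux


open LK in
/-- faithfulness criterion for LK-representations. -/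
theorem statement_4 {I : Type} [Fintype I] [DecidableEq I] (M : CoxM I) (hsmall : M.Small)
    (R : Type) [CommRing R] (b c d : R) (hb : IsUnit b) (hc : IsUnit c) (hd : IsUnit d)
    (a : R) (ha : a = d - b * c * Ring.inverse d)
    (f : I → (VV M R →ₗ[R] R)) (hf : IsLK M R a b c d f)
    (psi : AM M →* Module.End R (VV M R))
    (hpsi : ∀ i : I, psi (gen M i) = psim M R a b c d f i)
    (hcanc : ∀ x y z : Module.End R (VV M R),
      x ∈ Set.range psi → y ∈ Set.range psi → z ∈ Set.range psi → x * y = x * z → y = z)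
    (R0 : Type) [CommRing R0] [LinearOrder R0] [IsStrictOrderedRing R0] (pr : R →+* R0)
    (hapos : 0 < pr a) (hbpos : 0 < pr b) (hcpos : 0 < pr c) (hdpos : 0 < pr d)
    (hzero : ∀ (i : I) (α : Pos M), pr (f i (ev M R α)) = 0) :
    Function.Injective psi := by
  classical
  have hone : ∀ y : AM M, psi y = 1 → y = 1 := by
    intro y hy
    obtain ⟨u, rfl⟩ := LKAux.exists_gprod M y
    cases u with
    | nil => rfl
    | cons j t =>
      exfalso
      have hdvd : gen M j ∣ LKAux.gprod M (j :: t) := by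
        rw [LKAux.gprod_cons]; exact ⟨_, rfl⟩
      have h0 := LKAux.row0_of_dvd pr hpsi hzero hdvd (simplePos M j)
      rw [hy, LKAux.ent_one, if_pos rfl] at h0
      exact one_ne_zero h0
  suffices h : ∀ n, ∀ x y : AM M, LKAux.wlenN M x ≤ n → psi x = psi y → x = y by
    intro x y e
    exact h (LKAux.wlenN M x) x y le_rfl e
  intro n
  induction n with
  | zero =>
    intro x y hx he
    obtain ⟨w, rfl⟩ := LKAux.exists_gprod M x
    cases w with
    | nil =>
      rw [LKAux.gprod_nil] at he ⊢
      rw [map_one] at he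
      exact (hone y he.symm).symm
    | cons j t =>
      exfalso
      rw [LKAux.wlenN_gprod] at hx
      simp at hx
  | succ n IH =>
    intro x y hx he
    obtain ⟨w, rfl⟩ := LKAux.exists_gprod M x
    cases w with
    | nil =>
      rw [LKAux.gprod_nil] at he ⊢
      rw [map_one] at he
      exact (hone y he.symm).symm
    | cons j t =>
      have hdvdx : gen M j ∣ LKAux.gprod M (j :: t) := by
        rw [LKAux.gprod_cons]; exact ⟨_, rfl⟩
      have hrowy : ∀ α, LKAux.ent pr (psi y) (simplePos M j) α = 0 := by
        intro α
        rw [← he]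
        exact LKAux.row0_of_dvd pr hpsi hzero hdvdx α
      obtain ⟨y', rfl⟩ := LKAux.key_lemma pr hsmall hpsi hzero hapos hbpos hcpos hdpos
        (LKAux.wlenN M y) y le_rfl j hrowy
      rw [LKAux.gprod_cons] at he hx ⊢
      have he' : psi (gen M j) * psi (LKAux.gprod M t) = psi (gen M j) * psi y' := by
        rw [← map_mul, ← map_mul, he]
      have hcx : psi (LKAux.gprod M t) = psi y' :=
        hcanc _ _ _ ⟨_, rfl⟩ ⟨_, rfl⟩ ⟨_, rfl⟩ he'
      have hlx : LKAux.wlenN M (LKAux.gprod M t) ≤ n := by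
        rw [LKAux.wlenN_mul, LKAux.wlenN_gen] at hx
        omega
      rw [IH (LKAux.gprod M t) y' hlx hcx]
end

section
/- Let Γ be a Coxeter matrix with finite index set I, B⁺ its Artin-Tits monoid, M a left cancellative monoid, and ρ : B⁺ → M a monoid homomorphism such that for all b, b' ∈ B⁺, ρ(b) = ρ(b') implies I(b) = I(b'). Then ρ is injective. -/
set_option maxRecDepth 4000

namespace LK

variable {I : Type}

/-- Length homomorphism on the free monoid. -/
def lenHom : FreeMonoid I →* Multiplicative ℕ :=
  FreeMonoid.lift (fun _ => Multiplicative.ofAdd 1)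

theorem lenHom_ofList (l : List I) :
    lenHom (FreeMonoid.ofList l) = Multiplicative.ofAdd l.length := by
  induction l with
  | nil => rfl
  | cons a l ih =>
    have : FreeMonoid.ofList (a :: l) = FreeMonoid.of a * FreeMonoid.ofList l := rfl
    rw [this, map_mul, ih]
    show Multiplicative.ofAdd 1 * Multiplicative.ofAdd l.length = _
    rw [mul_comm, ← ofAdd_add, List.length_cons]

theorem lenHom_braidWord (k : ℕ) (i j : I) :
    lenHom (braidWord k i j) = Multiplicative.ofAdd k := by
  rw [braidWord, lenHom_ofList, braidList, List.length_map, List.length_range]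

theorem artinCon_le_ker (M : CoxM I) : artinCon M ≤ Con.ker (lenHom (I := I)) := by
  apply Con.conGen_le.2
  rintro x y ⟨i, j, hm, rfl, rfl⟩
  show lenHom _ = lenHom _
  rw [lenHom_braidWord, lenHom_braidWord]

/-- Length homomorphism on the Artin monoid. -/
def lenA (M : CoxM I) : AM M →* Multiplicative ℕ :=
  Con.lift _ lenHom (artinCon_le_ker M)

/-- The length of an element of the Artin monoid. -/
def ln (M : CoxM I) (x : AM M) : ℕ := Multiplicative.toAdd (lenA M x)

theorem ln_mul (M : CoxM I) (x y : AM M) : ln M (x * y) = ln M x + ln M y := by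
  unfold ln; rw [map_mul]; rfl

theorem ln_gen (M : CoxM I) (i : I) : ln M (gen M i) = 1 := by
  have h1 : lenA M (gen M i) = lenHom (FreeMonoid.of i) := rfl
  have h2 : lenHom (FreeMonoid.of i) = Multiplicative.ofAdd 1 := lenHom_ofList [i]
  unfold ln
  rw [h1, h2]; rfl

theorem ln_one (M : CoxM I) : ln M (1 : AM M) = 0 := by
  unfold ln; rw [map_one]; rfl

theorem AM.decomp (M : CoxM I) (x : AM M) :
    x = 1 ∨ ∃ i x', x = gen M i * x' := by
  obtain ⟨w, rfl⟩ := Con.mk'_surjective (c := artinCon M) x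
  induction w using FreeMonoid.recOn with
  | one => left; exact map_one _
  | of_mul i w _ =>
    right
    exact ⟨i, (artinCon M).mk' w, by rw [map_mul]; rfl⟩

theorem not_gen_dvd_one (M : CoxM I) (i : I) : ¬ gen M i ∣ (1 : AM M) := by
  rintro ⟨c, hc⟩
  have := congrArg (ln M) hc
  rw [ln_one, ln_mul, ln_gen] at this
  omega

end LK

open LK in
/-- injectivity criterion for monoid homomorphisms on Artin–Tits monoids. -/
theorem statement_5 {I : Type} [Fintype I] [DecidableEq I] (M : CoxM I)
    (Mo : Type) [Monoid Mo] (hcanc : ∀ x y z : Mo, x * y = x * z → y = z)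
    (rho : AM M →* Mo)
    (h : ∀ x y : AM M, rho x = rho y → IdxSet M x = IdxSet M y) :
    Function.Injective rho := by
  intro x y hxy
  obtain ⟨n, hn⟩ : ∃ n, ln M x = n := ⟨_, rfl⟩
  induction n using Nat.strong_induction_on generalizing x y with
  | _ n ih =>
    rcases AM.decomp M x with rfl | ⟨i, x', rfl⟩
    · rcases AM.decomp M y with rfl | ⟨j, y', rfl⟩
      · rfl
      · exfalso
        have hI := h _ _ hxy
        have : gen M j ∣ gen M j * y' := Dvd.intro _ rfl
        have hj : j ∈ IdxSet M (gen M j * y') := this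
        rw [← hI] at hj
        exact not_gen_dvd_one M j hj
    · have hI := h _ _ hxy
      have hi : i ∈ IdxSet M (gen M i * x') := Dvd.intro _ rfl
      rw [hI] at hi
      obtain ⟨y', rfl⟩ := hi
      have hxy' : rho x' = rho y' := by
        apply hcanc (rho (gen M i))
        rw [← map_mul, ← map_mul, hxy]
      have hlt : ln M x' < n := by
        rw [← hn, ln_mul, ln_gen]; omega
      rw [ih _ hlt hxy' rfl]
end

section
/- Suppose (𝔟,𝔠,𝔡) ∈ (𝔯^×)³, 𝔞 = 𝔡 − 𝔟𝔠𝔡⁻¹, and a family (f_i)_{i∈I} ∈ (V*)^I satisfies (writing 𝔣_{i,α} = f_i(e_α)): (1) 𝔣_{i,α_j} = 0 for all i ≠ j; (6) 𝔡𝔣_{i,α} = 𝔟𝔣_{i,β} whenever m_{i,j} = 2 and α = s_j(β) with dep(α) = dep(β)+1; (8) 𝔠𝔣_{i,α} = 𝔟𝔣_{j,γ} − 𝔞𝔣_{i,β} whenever m_{i,j} = 3 and β = s_i(γ), α = s_j(β) with dep(γ) < dep(β) < dep(α); (10) 𝔡𝔣_{i,α} = 𝔟𝔣_{j,β} whenever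 m_{i,j} = 3 and γ, β = s_j(γ), α = s_i(β) ∈ Φ⁺ satisfy s_i(γ) = γ, s_j(α) = α and dep(γ) < dep(β) < dep(α). Then the family also satisfies relation (5): 𝔣_{i,α} = 𝔣_{j,α} whenever m_{i,j} = 3 and s_i(α) = s_j(α) = α. -/
set_option maxRecDepth 4000

set_option linter.unusedSectionVars false
set_option linter.unusedVariables false
namespace LK
section Aux
variable {I : Type} [Fintype I] [DecidableEq I]

theorem m_diag (M : CoxM I) (i : I) : M.m i i = 1 := (M.one_iff i i).mpr rfl

theorem cf_diag (M : CoxM I) (i : I) : cf M i i = 2 := by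
  simp [cf, m_diag, Real.cos_pi]

theorem cf_two {M : CoxM I} {i j : I} (h : M.m i j = 2) : cf M i j = 0 := by
  simp only [cf, h]
  norm_num [Real.cos_pi_div_two]

theorem cf_three {M : CoxM I} {i j : I} (h : M.m i j = 3) : cf M i j = -1 := by
  simp only [cf, h]
  norm_num [Real.cos_pi_div_three]

theorem cf_symm (M : CoxM I) (i j : I) : cf M i j = cf M j i := by
  unfold cf; rw [M.symm]

theorem m_cases {M : CoxM I} (hs : M.Small) {i j : I} (h : i ≠ j) :
    M.m i j = 2 ∨ M.m i j = 3 := by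
  rcases hs i j with h1 | h2 | h3
  · exact absurd ((M.one_iff i j).mp h1) h
  · exact Or.inl h2
  · exact Or.inr h3

theorem cf_cases {M : CoxM I} (hs : M.Small) {i j : I} (h : i ≠ j) :
    cf M i j = 0 ∨ cf M i j = -1 := by
  rcases m_cases hs h with h2 | h3
  · exact Or.inl (cf_two h2)
  · exact Or.inr (cf_three h3)

theorem bform_sroot (M : CoxM I) (v : I → ℝ) (k : I) :
    bform M v (sroot k) = ∑ l, v l * cf M l k := by
  unfold bform sroot
  refine Finset.sum_congr rfl fun l _ => ?_
  simp [Pi.single_apply, mul_ite, ite_mul]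

theorem bform_sroot_sroot (M : CoxM I) (l k : I) :
    bform M (sroot l) (sroot k) = cf M l k := by
  rw [bform_sroot]
  simp [sroot, Pi.single_apply, ite_mul]

theorem bform_symm (M : CoxM I) (x y : I → ℝ) : bform M x y = bform M y x := by
  unfold bform
  rw [Finset.sum_comm]
  exact Finset.sum_congr rfl fun i _ => Finset.sum_congr rfl fun j _ => by
    rw [cf_symm]; ring

theorem bform_add_left (M : CoxM I) (x x' y : I → ℝ) :
    bform M (x + x') y = bform M x y + bform M x' y := by
  unfold bform
  rw [← Finset.sum_add_distrib]
  exact Finset.sum_congr rfl fun i _ => by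
    rw [← Finset.sum_add_distrib]
    exact Finset.sum_congr rfl fun j _ => by simp [add_mul]

theorem bform_smul_left (M : CoxM I) (t : ℝ) (x y : I → ℝ) :
    bform M (t • x) y = t * bform M x y := by
  unfold bform
  rw [Finset.mul_sum]
  exact Finset.sum_congr rfl fun i _ => by
    rw [Finset.mul_sum]
    exact Finset.sum_congr rfl fun j _ => by simp [mul_assoc]

theorem bform_sub_left (M : CoxM I) (x x' y : I → ℝ) :
    bform M (x - x') y = bform M x y - bform M x' y := by
  unfold bform
  rw [← Finset.sum_sub_distrib]
  exact Finset.sum_congr rfl fun i _ => by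
    rw [← Finset.sum_sub_distrib]
    exact Finset.sum_congr rfl fun j _ => by simp [sub_mul]

theorem bform_sub_right (M : CoxM I) (x y y' : I → ℝ) :
    bform M x (y - y') = bform M x y - bform M x y' := by
  rw [bform_symm, bform_sub_left, bform_symm M y x, bform_symm M y' x]

theorem bform_smul_right (M : CoxM I) (t : ℝ) (x y : I → ℝ) :
    bform M x (t • y) = t * bform M x y := by
  rw [bform_symm, bform_smul_left, bform_symm]

theorem srefl_def (M : CoxM I) (i : I) (v : I → ℝ) :
    srefl M i v = v - bform M v (sroot i) • sroot i := rfl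

theorem sroot_self (i : I) : sroot i i = (1 : ℝ) := Pi.single_eq_same i 1

theorem sroot_ne {i l : I} (h : l ≠ i) : sroot i l = (0 : ℝ) := Pi.single_eq_of_ne h 1

theorem sroot_nonneg (i l : I) : (0:ℝ) ≤ sroot i l := by
  rcases eq_or_ne l i with rfl | h
  · rw [sroot_self]; norm_num
  · rw [sroot_ne h]

theorem srefl_apply (M : CoxM I) (i : I) (v : I → ℝ) (l : I) :
    srefl M i v l = v l - bform M v (sroot i) * sroot i l := rfl

theorem srefl_apply_ne (M : CoxM I) {i l : I} (v : I → ℝ) (h : l ≠ i) :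
    srefl M i v l = v l := by
  rw [srefl_apply, sroot_ne h, mul_zero, sub_zero]

theorem srefl_apply_self (M : CoxM I) (i : I) (v : I → ℝ) :
    srefl M i v i = v i - bform M v (sroot i) := by
  rw [srefl_apply, sroot_self, mul_one]

theorem bform_srefl_left (M : CoxM I) (i : I) (v y : I → ℝ) :
    bform M (srefl M i v) y = bform M v y - bform M v (sroot i) * bform M (sroot i) y := by
  rw [srefl_def, bform_sub_left, bform_smul_left]

theorem srefl_fix {M : CoxM I} {i : I} {v : I → ℝ} (h : bform M v (sroot i) = 0) :
    srefl M i v = v := by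
  rw [srefl_def, h, zero_smul, sub_zero]

theorem fix_bform {M : CoxM I} {i : I} {v : I → ℝ} (h : srefl M i v = v) :
    bform M v (sroot i) = 0 := by
  have := congrFun h i
  rw [srefl_apply_self] at this
  linarith

theorem srefl_srefl (M : CoxM I) (i : I) (v : I → ℝ) :
    srefl M i (srefl M i v) = v := by
  have hB : bform M (srefl M i v) (sroot i) = - bform M v (sroot i) := by
    rw [bform_srefl_left, bform_sroot_sroot, cf_diag]; ring
  rw [srefl_def M i (srefl M i v), hB, srefl_def]
  module

theorem bform_srefl_srefl (M : CoxM I) (i : I) (u v : I → ℝ) :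
    bform M (srefl M i u) (srefl M i v) = bform M u v := by
  rw [srefl_def M i v, bform_sub_right, bform_smul_right, bform_srefl_left, bform_srefl_left,
    bform_sroot_sroot, cf_diag, bform_symm M (sroot i) v]
  ring

theorem srefl_comm {M : CoxM I} {i j : I} (hij : cf M i j = 0) (hji : cf M j i = 0)
    (v : I → ℝ) : srefl M i (srefl M j v) = srefl M j (srefl M i v) := by
  have e1 : bform M (srefl M j v) (sroot i) = bform M v (sroot i) := by
    rw [bform_srefl_left, bform_sroot_sroot, hji, mul_zero, sub_zero]
  have e2 : bform M (srefl M i v) (sroot j) = bform M v (sroot j) := by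
    rw [bform_srefl_left, bform_sroot_sroot, hij, mul_zero, sub_zero]
  rw [srefl_def M i (srefl M j v), e1, srefl_def M j (srefl M i v), e2,
    srefl_def M j v, srefl_def M i v]
  module

theorem srefl_braid {M : CoxM I} {i j : I} (hij : cf M i j = -1) (hji : cf M j i = -1)
    (v : I → ℝ) :
    srefl M i (srefl M j (srefl M i v)) = srefl M j (srefl M i (srefl M j v)) := by
  set p := bform M v (sroot i) with hp
  set r := bform M v (sroot j) with hr
  have e0 : bform M (srefl M i v) (sroot i) = -p := by
    rw [bform_srefl_left, bform_sroot_sroot, cf_diag]; ring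
  have e1 : bform M (srefl M i v) (sroot j) = r + p := by
    rw [bform_srefl_left, bform_sroot_sroot, hij]; ring
  have e2 : bform M (srefl M j (srefl M i v)) (sroot i) = r := by
    rw [bform_srefl_left, bform_sroot_sroot, hji, e0, e1]; ring
  have e0' : bform M (srefl M j v) (sroot j) = -r := by
    rw [bform_srefl_left, bform_sroot_sroot, cf_diag]; ring
  have e1' : bform M (srefl M j v) (sroot i) = p + r := by
    rw [bform_srefl_left, bform_sroot_sroot, hji]; ring
  have e2' : bform M (srefl M i (srefl M j v)) (sroot j) = p := by
    rw [bform_srefl_left, bform_sroot_sroot, hij, e0', e1']; ring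
  have s2 : srefl M j (srefl M i v) = v - p • sroot i - (r + p) • sroot j := by
    rw [srefl_def M j (srefl M i v), e1, srefl_def M i v, ← hp]
  have s2' : srefl M i (srefl M j v) = v - r • sroot j - (p + r) • sroot i := by
    rw [srefl_def M i (srefl M j v), e1', srefl_def M j v, ← hr]
  rw [srefl_def M i (srefl M j (srefl M i v)), e2, s2,
    srefl_def M j (srefl M i (srefl M j v)), e2', s2']
  module

end Aux
end LK
namespace LK
section Aux2
variable {I : Type} [Fintype I] [DecidableEq I]

/-- The mathlib Coxeter matrix associated to a `CoxM`. -/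
def MX (M : CoxM I) : CoxeterMatrix I where
  M := Matrix.of M.m
  isSymm := by
    ext i j
    exact M.symm j i
  diagonal i := m_diag M i
  off_diagonal i i' hne h1 := hne ((M.one_iff i i').mp h1)

/-- The Coxeter group of `M` (mathlib version). -/
abbrev CW (M : CoxM I) := (MX M).Group

/-- The Coxeter system of `M`. -/
def csys (M : CoxM I) : CoxeterSystem (MX M) (CW M) := (MX M).toCoxeterSystem

/-- The simple reflection as a linear endomorphism of `E`. -/
noncomputable def sreflLin (M : CoxM I) (i : I) : Module.End ℝ (I → ℝ) where
  toFun := srefl M i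
  map_add' u v := by
    show srefl M i (u + v) = srefl M i u + srefl M i v
    rw [srefl_def, srefl_def, srefl_def, bform_add_left]
    module
  map_smul' t v := by
    show srefl M i (t • v) = t • srefl M i v
    rw [srefl_def, srefl_def, bform_smul_left]
    module

@[simp] theorem sreflLin_apply (M : CoxM I) (i : I) (v : I → ℝ) :
    sreflLin M i v = srefl M i v := rfl

theorem lift_ok {M : CoxM I} (hs : M.Small) :
    CoxeterMatrix.IsLiftable (MX M) (fun i => sreflLin M i) := by
  intro i j
  have hm : (MX M) i j = M.m i j := rfl
  rcases hs i j with h1 | h2 | h3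
  · have hij : i = j := (M.one_iff i j).mp h1
    subst hij
    rw [hm, h1, pow_one]
    exact LinearMap.ext fun v => srefl_srefl M i v
  · have hij : cf M i j = 0 := cf_two h2
    have hji : cf M j i = 0 := cf_two (by rw [M.symm]; exact h2)
    rw [hm, h2]
    refine LinearMap.ext fun v => ?_
    simp only [pow_succ, pow_zero, one_mul, Module.End.mul_apply, Module.End.one_apply,
      sreflLin_apply]
    rw [srefl_comm hij hji v, srefl_srefl, srefl_srefl]
  · have hij : cf M i j = -1 := cf_three h3
    have hji : cf M j i = -1 := cf_three (by rw [M.symm]; exact h3)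
    rw [hm, h3]
    refine LinearMap.ext fun v => ?_
    simp only [pow_succ, pow_zero, one_mul, Module.End.mul_apply, Module.End.one_apply,
      sreflLin_apply]
    rw [← srefl_braid hij hji v, srefl_srefl, srefl_srefl, srefl_srefl]

/-- The geometric representation of the Coxeter group. -/
noncomputable def rho (M : CoxM I) (hs : M.Small) : CW M →* Module.End ℝ (I → ℝ) :=
  (csys M).lift ⟨fun i => sreflLin M i, lift_ok hs⟩

theorem rho_simple (M : CoxM I) (hs : M.Small) (i : I) :
    rho M hs ((csys M).simple i) = sreflLin M i :=
  (csys M).lift_apply_simple (lift_ok hs) i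

theorem rho_simple_apply (M : CoxM I) (hs : M.Small) (i : I) (v : I → ℝ) :
    rho M hs ((csys M).simple i) v = srefl M i v := by rw [rho_simple]; rfl

theorem rho_mul_apply (M : CoxM I) (hs : M.Small) (x y : CW M) (v : I → ℝ) :
    rho M hs (x * y) v = rho M hs x (rho M hs y v) := by
  rw [map_mul]; rfl

theorem rho_simple_right (M : CoxM I) (hs : M.Small) (x : CW M) (k : I) (v : I → ℝ) :
    rho M hs (x * (csys M).simple k) v = rho M hs x (srefl M k v) := by
  rw [rho_mul_apply, rho_simple_apply]

theorem len_mul_simple_le (M : CoxM I) (w : CW M) (k : I) :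
    (csys M).length (w * (csys M).simple k) ≤ (csys M).length w + 1 := by
  rcases (csys M).length_mul_simple w k with h | h <;> omega

theorem simple_comm {M : CoxM I} {i j : I} (h2 : M.m i j = 2) :
    (csys M).simple i * (csys M).simple j = (csys M).simple j * (csys M).simple i := by
  have hp : ((csys M).simple i * (csys M).simple j) ^ (2:ℕ) = 1 := by
    have h := (csys M).simple_mul_simple_pow i j
    rwa [show (MX M) i j = 2 from h2] at h
  have hp' : ((csys M).simple i * (csys M).simple j) * ((csys M).simple i * (csys M).simple j)
      = 1 := by rw [← pow_two]; exact hp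
  have key := eq_inv_of_mul_eq_one_left hp'
  rw [key, mul_inv_rev, (csys M).inv_simple, (csys M).inv_simple]

theorem simple_braid {M : CoxM I} {i j : I} (h3 : M.m i j = 3) :
    (csys M).simple i * (csys M).simple j * (csys M).simple i
      = (csys M).simple j * (csys M).simple i * (csys M).simple j := by
  have hp : ((csys M).simple i * (csys M).simple j) ^ (3:ℕ) = 1 := by
    have h := (csys M).simple_mul_simple_pow i j
    rwa [show (MX M) i j = 3 from h3] at h
  have e : ((csys M).simple i * (csys M).simple j) ^ (3:ℕ)
      = ((csys M).simple i * (csys M).simple j * (csys M).simple i)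
        * ((csys M).simple j * (csys M).simple i * (csys M).simple j) := by
    rw [pow_succ, pow_succ, pow_one]
    simp only [mul_assoc]
  have key : ((csys M).simple i * (csys M).simple j * (csys M).simple i)
      * ((csys M).simple j * (csys M).simple i * (csys M).simple j) = 1 := by
    rw [← e, hp]
  have h2 := eq_inv_of_mul_eq_one_left key
  rwa [mul_inv_rev, mul_inv_rev, (csys M).inv_simple, (csys M).inv_simple,
    ← mul_assoc] at h2

/-- Tits' positivity theorem. -/
theorem tits (M : CoxM I) (hs : M.Small) :
    ∀ n : ℕ, ∀ w : CW M, ∀ i : I, (csys M).length w ≤ n →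
    (csys M).length w < (csys M).length (w * (csys M).simple i) →
    ∀ l, 0 ≤ rho M hs w (sroot i) l := by
  intro n
  induction n with
  | zero =>
    intro w i hw _ l
    have : w = 1 := (csys M).length_eq_zero_iff.mp (Nat.le_zero.mp hw)
    subst this
    rw [map_one, Module.End.one_apply]
    exact sroot_nonneg i l
  | succ n IH =>
    intro w i hwn hup l
    by_cases hw1 : w = 1
    · subst hw1
      rw [map_one, Module.End.one_apply]
      exact sroot_nonneg i l
    obtain ⟨j, hj⟩ := (csys M).exists_rightDescent_of_ne_one hw1
    have hj' : (csys M).length (w * (csys M).simple j) < (csys M).length w := hj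
    have hji : j ≠ i := by
      intro h
      rw [h] at hj'
      omega
    have h2 : (csys M).length (w * (csys M).simple j) + 1 = (csys M).length w := by
      rcases (csys M).length_mul_simple w j with h | h <;> omega
    have hw2w : (w * (csys M).simple j) * (csys M).simple j = w := by
      rw [mul_assoc, (csys M).simple_mul_simple_self, mul_one]
    rcases m_cases hs (Ne.symm hji) with hm2 | hm3
    · -- m i j = 2
      have hcfij : cf M i j = 0 := cf_two hm2
      rcases (csys M).length_mul_simple (w * (csys M).simple j) i with hup4 | hdown4
      · have key := IH (w * (csys M).simple j) i (by omega) (by omega) l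
        have hfix : srefl M j (sroot i) = sroot i := by
          apply srefl_fix
          rw [bform_sroot_sroot, hcfij]
        calc (0:ℝ) ≤ rho M hs (w * (csys M).simple j) (sroot i) l := key
          _ = rho M hs w (sroot i) l := by
              rw [← hw2w, rho_simple_right, hfix]
      · exfalso
        have hne4 := (csys M).length_mul_simple_ne (w * (csys M).simple j) i
        have hx : (w * (csys M).simple j * (csys M).simple i) * (csys M).simple j
            = w * (csys M).simple i := by
          have e : (csys M).simple j * (csys M).simple i * (csys M).simple j
              = (csys M).simple i := by
            rw [← simple_comm hm2, mul_assoc, (csys M).simple_mul_simple_self, mul_one]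
          calc w * (csys M).simple j * (csys M).simple i * (csys M).simple j
              = w * ((csys M).simple j * (csys M).simple i * (csys M).simple j) := by
                simp only [mul_assoc]
            _ = w * (csys M).simple i := by rw [e]
        have hle : (csys M).length (w * (csys M).simple i)
            ≤ (csys M).length (w * (csys M).simple j * (csys M).simple i) + 1 := by
          rw [← hx]; exact len_mul_simple_le M _ j
        omega
    · -- m i j = 3
      have hcfij : cf M i j = -1 := cf_three hm3
      have hcfji : cf M j i = -1 := cf_three (by rw [M.symm]; exact hm3)
      have hbraid := simple_braid hm3
      rcases (csys M).length_mul_simple (w * (csys M).simple j) i with hup4 | hdown4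
      · -- w2 is a local minimum
        have keyi := IH (w * (csys M).simple j) i (by omega) (by omega) l
        have keyj := IH (w * (csys M).simple j) j (by omega) (by rw [hw2w]; omega) l
        have hstep : srefl M j (sroot i) = sroot i + sroot j := by
          rw [srefl_def, bform_sroot_sroot, hcfij]
          module
        rw [← hw2w, rho_simple_right, hstep, map_add, Pi.add_apply]
        exact add_nonneg keyi keyj
      · -- descend further
        have hne4 := (csys M).length_mul_simple_ne (w * (csys M).simple j) i
        have hw4w2 : (w * (csys M).simple j * (csys M).simple i) * (csys M).simple i
            = w * (csys M).simple j := by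
          rw [mul_assoc, (csys M).simple_mul_simple_self, mul_one]
        rcases (csys M).length_mul_simple (w * (csys M).simple j * (csys M).simple i) j
          with hup5 | hdown5
        · -- w4 is a local minimum
          have keyi := IH (w * (csys M).simple j * (csys M).simple i) i (by omega)
            (by rw [hw4w2]; omega) l
          have keyj := IH (w * (csys M).simple j * (csys M).simple i) j (by omega)
            (by omega) l
          have hw4w : w * (csys M).simple j * (csys M).simple i * (csys M).simple i
              * (csys M).simple j = w := by
            rw [hw4w2, hw2w]
          have hstep : srefl M i (srefl M j (sroot i)) = sroot j := by
            have h1 : srefl M j (sroot i) = sroot i + sroot j := by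
              rw [srefl_def, bform_sroot_sroot, hcfij]; module
            rw [h1, srefl_def, bform_add_left, bform_sroot_sroot, bform_sroot_sroot,
              cf_diag, hcfji]
            have h21 : (2 + -1 : ℝ) = 1 := by norm_num
            rw [h21]
            module
          rw [← hw4w, rho_simple_right, rho_simple_right, hstep]
          exact keyj
        · -- contradiction
          exfalso
          have hne5 := (csys M).length_mul_simple_ne
            (w * (csys M).simple j * (csys M).simple i) j
          have hx : w * (csys M).simple j * (csys M).simple i * (csys M).simple j
              * (csys M).simple i * (csys M).simple j = w * (csys M).simple i := by
            have e : ((csys M).simple j * (csys M).simple i * (csys M).simple j)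
                * (csys M).simple i * (csys M).simple j = (csys M).simple i := by
              rw [← hbraid]
              calc (csys M).simple i * (csys M).simple j * (csys M).simple i
                    * (csys M).simple i * (csys M).simple j
                  = (csys M).simple i * (csys M).simple j
                    * ((csys M).simple i * (csys M).simple i) * (csys M).simple j := by
                    simp only [mul_assoc]
                _ = (csys M).simple i := by
                    rw [(csys M).simple_mul_simple_self, mul_one, mul_assoc,
                      (csys M).simple_mul_simple_self, mul_one]
            calc w * (csys M).simple j * (csys M).simple i * (csys M).simple j
                  * (csys M).simple i * (csys M).simple j
                = w * (((csys M).simple j * (csys M).simple i * (csys M).simple j)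
                  * (csys M).simple i * (csys M).simple j) := by
                  simp only [mul_assoc]
              _ = w * (csys M).simple i := by rw [e]
          have hle1 : (csys M).length (w * (csys M).simple j * (csys M).simple i
              * (csys M).simple j * (csys M).simple i)
              ≤ (csys M).length (w * (csys M).simple j * (csys M).simple i
                * (csys M).simple j) + 1 :=
            len_mul_simple_le M _ i
          have hle2 : (csys M).length (w * (csys M).simple i)
              ≤ (csys M).length (w * (csys M).simple j * (csys M).simple i
                * (csys M).simple j * (csys M).simple i) + 1 := by
            rw [← hx]
            exact len_mul_simple_le M _ j
          omega

end Aux2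
end LK
namespace LK
section Aux3
variable {I : Type} [Fintype I] [DecidableEq I]

theorem srefl_sroot_self (M : CoxM I) (k : I) : srefl M k (sroot k) = -sroot k := by
  rw [srefl_def, bform_sroot_sroot, cf_diag]
  module

theorem isRoot_rho {M : CoxM I} (hs : M.Small) (w : CW M) {v : I → ℝ} (hv : IsRoot M v) :
    IsRoot M (rho M hs w v) := by
  obtain ⟨ω, rfl⟩ := (csys M).wordProd_surjective w
  induction ω with
  | nil => rw [CoxeterSystem.wordProd_nil, map_one, Module.End.one_apply]; exact hv
  | cons i ω ih =>
    rw [CoxeterSystem.wordProd_cons, rho_mul_apply, rho_simple_apply]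
    exact IsRoot.srefl i _ ih

theorem isRoot_rep {M : CoxM I} (hs : M.Small) {v : I → ℝ} (hv : IsRoot M v) :
    ∃ (w : CW M) (k : I), rho M hs w (sroot k) = v := by
  induction hv with
  | simple i => exact ⟨1, i, by rw [map_one, Module.End.one_apply]⟩
  | srefl i u _ ih =>
    obtain ⟨w, k, e⟩ := ih
    exact ⟨(csys M).simple i * w, k, by rw [rho_mul_apply, e, rho_simple_apply]⟩

theorem root_norm {M : CoxM I} {v : I → ℝ} (hv : IsRoot M v) : bform M v v = 2 := by
  induction hv with
  | simple i => rw [bform_sroot_sroot, cf_diag]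
  | srefl i u _ ih => rw [bform_srefl_srefl]; exact ih

theorem root_sign {M : CoxM I} (hs : M.Small) {v : I → ℝ} (hv : IsRoot M v) :
    (∀ l, 0 ≤ v l) ∨ (∀ l, v l ≤ 0) := by
  obtain ⟨w, k, e⟩ := isRoot_rep hs hv
  rcases (csys M).length_mul_simple w k with hup | hdown
  · left
    intro l
    rw [← e]
    exact tits M hs ((csys M).length w) w k le_rfl (by omega) l
  · right
    have hne := (csys M).length_mul_simple_ne w k
    have hw : (w * (csys M).simple k) * (csys M).simple k = w := by
      rw [mul_assoc, (csys M).simple_mul_simple_self, mul_one]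
    have key := tits M hs ((csys M).length (w * (csys M).simple k)) (w * (csys M).simple k) k
      le_rfl (by rw [hw]; omega)
    intro l
    have e2 : rho M hs (w * (csys M).simple k) (sroot k) = -v := by
      rw [← e, rho_simple_right, srefl_sroot_self, map_neg]
    have e3 := congrFun e2 l
    rw [Pi.neg_apply] at e3
    have := key l
    linarith

theorem desc_of_neg {M : CoxM I} (hs : M.Small) (w : CW M) (k : I)
    (h : ¬ ∀ l, 0 ≤ rho M hs w (sroot k) l) :
    (csys M).length (w * (csys M).simple k) < (csys M).length w := by
  rcases (csys M).length_mul_simple w k with hup | hdown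
  · exact absurd (tits M hs ((csys M).length w) w k le_rfl (by omega)) h
  · have hne := (csys M).length_mul_simple_ne w k
    omega

theorem foldr_eq_rho {M : CoxM I} (hs : M.Small) (ω : List I) (v : I → ℝ) :
    ω.foldr (srefl M) v = rho M hs ((csys M).wordProd ω) v := by
  induction ω with
  | nil => rw [CoxeterSystem.wordProd_nil, map_one, Module.End.one_apply]; rfl
  | cons i ω ih =>
    rw [CoxeterSystem.wordProd_cons, rho_mul_apply, rho_simple_apply, List.foldr_cons, ih]

theorem dep_le {M : CoxM I} (hs : M.Small) {v : I → ℝ} (w : CW M)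
    (h : ∃ l, rho M hs w v l < 0) : dep M v ≤ (csys M).length w := by
  obtain ⟨ω, hlen, hw⟩ := (csys M).exists_reduced_word w
  obtain ⟨l, hl⟩ := h
  exact Nat.sInf_le ⟨ω, by rw [hw]; exact hlen.symm, l, by rw [foldr_eq_rho hs, ← hw]; exact hl⟩

theorem dep_pos_of_lt {M : CoxM I} (hs : M.Small) {v : I → ℝ} (w : CW M)
    (h : (csys M).length w < dep M v) : ∀ l, 0 ≤ rho M hs w v l := by
  by_contra hc
  push_neg at hc
  obtain ⟨l, hl⟩ := hc
  exact absurd (dep_le hs w ⟨l, hl⟩) (by omega)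

theorem root_bad {M : CoxM I} (hs : M.Small) {v : I → ℝ} (hv : IsRoot M v) :
    ∃ w : CW M, ∃ l, rho M hs w v l < 0 := by
  obtain ⟨w, k, e⟩ := isRoot_rep hs hv
  refine ⟨(csys M).simple k * w⁻¹, k, ?_⟩
  have h1 : rho M hs ((csys M).simple k * w⁻¹) v = srefl M k (sroot k) := by
    rw [← e, ← rho_mul_apply, mul_assoc, inv_mul_cancel, mul_one, rho_simple_apply]
  rw [h1, srefl_sroot_self, Pi.neg_apply, sroot_self]
  norm_num

theorem dep_witness {M : CoxM I} (hs : M.Small) {v : I → ℝ} (hv : IsRoot M v) :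
    ∃ w : CW M, (csys M).length w = dep M v ∧ ∃ l, rho M hs w v l < 0 := by
  have hS : {n | ∃ l : List I, l.length = n ∧ ∃ k, l.foldr (srefl M) v k < 0}.Nonempty := by
    obtain ⟨w, l, hl⟩ := root_bad hs hv
    obtain ⟨ω, hlen, hw⟩ := (csys M).exists_reduced_word w
    exact ⟨ω.length, ω, rfl, l, by rw [foldr_eq_rho hs, ← hw]; exact hl⟩
  have hmem : ∃ ω : List I, ω.length = dep M v ∧ ∃ k, ω.foldr (srefl M) v k < 0 :=
    Nat.sInf_mem hS
  obtain ⟨ω, hlen, l, hl⟩ := hmem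
  rw [foldr_eq_rho hs] at hl
  have h1 : dep M v ≤ (csys M).length ((csys M).wordProd ω) := dep_le hs _ ⟨l, hl⟩
  have h2 : (csys M).length ((csys M).wordProd ω) ≤ dep M v := by
    rw [← hlen]
    exact (csys M).length_wordProd_le ω
  exact ⟨(csys M).wordProd ω, le_antisymm h2 h1, l, hl⟩

theorem dep_pos {M : CoxM I} (hs : M.Small) {v : I → ℝ} (hv : IsRoot M v)
    (hp : ∀ l, 0 ≤ v l) : 1 ≤ dep M v := by
  by_contra hc
  obtain ⟨w, hw, l, hl⟩ := dep_witness hs hv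
  have : w = 1 := (csys M).length_eq_zero_iff.mp (by omega)
  subst this
  rw [map_one, Module.End.one_apply] at hl
  exact absurd (hp l) (by linarith)

theorem nonneg_of_dep_pos {M : CoxM I} (hs : M.Small) {v : I → ℝ} (h : 1 ≤ dep M v) :
    ∀ l, 0 ≤ v l := by
  have := dep_pos_of_lt hs (v := v) 1 (by rw [(csys M).length_one]; omega)
  simpa using this

theorem dep_le_succ {M : CoxM I} (hs : M.Small) {v : I → ℝ} (hv : IsRoot M v) (k : I) :
    dep M v ≤ dep M (srefl M k v) + 1 := by
  obtain ⟨w, hw, l, hl⟩ := dep_witness hs (IsRoot.srefl k v hv)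
  have hb : rho M hs (w * (csys M).simple k) v l < 0 := by
    rw [rho_simple_right]; exact hl
  calc dep M v ≤ (csys M).length (w * (csys M).simple k) := dep_le hs _ ⟨l, hb⟩
    _ ≤ (csys M).length w + 1 := len_mul_simple_le M w k
    _ = dep M (srefl M k v) + 1 := by rw [hw]

theorem descent_exists {M : CoxM I} (hs : M.Small) {v : I → ℝ} (hv : IsRoot M v)
    (h1 : 1 ≤ dep M v) : ∃ k, dep M (srefl M k v) + 1 = dep M v := by
  obtain ⟨w, hw, l, hl⟩ := dep_witness hs hv
  have hw1 : w ≠ 1 := by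
    intro h
    rw [h, (csys M).length_one] at hw
    omega
  obtain ⟨j, hj⟩ := (csys M).exists_rightDescent_of_ne_one hw1
  have hj' : (csys M).length (w * (csys M).simple j) < (csys M).length w := hj
  refine ⟨j, ?_⟩
  have hwj : (w * (csys M).simple j) * (csys M).simple j = w := by
    rw [mul_assoc, (csys M).simple_mul_simple_self, mul_one]
  have hb : rho M hs (w * (csys M).simple j) (srefl M j v) l < 0 := by
    rw [rho_simple_right, srefl_srefl]
    exact hl
  have h2 : dep M (srefl M j v) ≤ (csys M).length (w * (csys M).simple j) :=
    dep_le hs _ ⟨l, hb⟩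
  have h3 := dep_le_succ hs hv j
  omega

theorem root_single {M : CoxM I} {v : I → ℝ} (hv : IsRoot M v) (hp : ∀ l, 0 ≤ v l)
    {k : I} (hsup : ∀ l, l ≠ k → v l = 0) : v = sroot k := by
  have hvk : v = v k • sroot k := by
    funext l
    rcases eq_or_ne l k with rfl | h
    · rw [Pi.smul_apply, sroot_self, smul_eq_mul, mul_one]
    · rw [Pi.smul_apply, sroot_ne h, hsup l h, smul_eq_mul, mul_zero]
  have hnorm := root_norm hv
  rw [hvk, bform_smul_left, bform_smul_right, bform_sroot_sroot, cf_diag] at hnorm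
  have hk1 : v k = 1 := by nlinarith [hp k]
  rw [hvk, hk1, one_smul]

theorem eq_sroot_of_bad {M : CoxM I} (hs : M.Small) {v : I → ℝ} (hv : IsRoot M v)
    (hp : ∀ l, 0 ≤ v l) {k : I} (hbad : ∃ l, srefl M k v l < 0) : v = sroot k := by
  obtain ⟨l₀, hl₀⟩ := hbad
  have hroot2 : IsRoot M (srefl M k v) := IsRoot.srefl k v hv
  rcases root_sign hs hroot2 with hpos | hneg
  · exact absurd (hpos l₀) (by linarith)
  · refine root_single hv hp fun l hl => ?_
    have h1 := hneg l
    rw [srefl_apply_ne M v hl] at h1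
    linarith [hp l]

theorem dep_one_simple {M : CoxM I} (hs : M.Small) {v : I → ℝ} (hv : IsRoot M v)
    (hp : ∀ l, 0 ≤ v l) (h1 : dep M v = 1) : ∃ m, v = sroot m := by
  obtain ⟨w, hw, l, hl⟩ := dep_witness hs hv
  rw [h1] at hw
  obtain ⟨m, rfl⟩ := (csys M).length_eq_one_iff.mp hw
  rw [rho_simple_apply] at hl
  exact ⟨m, eq_sroot_of_bad hs hv hp ⟨l, hl⟩⟩

theorem bform_pos_of_descent {M : CoxM I} (hs : M.Small) {v : I → ℝ} (hv : IsRoot M v)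
    (hp : ∀ l, 0 ≤ v l) {k : I} (hd : dep M (srefl M k v) < dep M v) :
    0 < bform M v (sroot k) := by
  rcases lt_trichotomy (bform M v (sroot k)) 0 with hq | hq | hq
  · exfalso
    have key : ∀ w : CW M, (csys M).length w < dep M v → ∀ l, 0 ≤ rho M hs w (srefl M k v) l := by
      intro w hw l
      by_cases hh : ∀ l', 0 ≤ rho M hs w (sroot k) l'
      · have e : rho M hs w (srefl M k v) l
            = rho M hs w v l - bform M v (sroot k) * rho M hs w (sroot k) l := by
          rw [srefl_def, map_sub, map_smul, Pi.sub_apply, Pi.smul_apply, smul_eq_mul]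
        rw [e]
        have h1 := dep_pos_of_lt hs w hw l
        have h2 := hh l
        nlinarith
      · have hlt := desc_of_neg hs w k hh
        have e : rho M hs w (srefl M k v) l = rho M hs (w * (csys M).simple k) v l := by
          rw [rho_simple_right]
        rw [e]
        exact dep_pos_of_lt hs _ (by omega) l
    obtain ⟨w, hw, l, hl⟩ := dep_witness hs (IsRoot.srefl k v hv)
    have := key w (by omega) l
    linarith
  · exact absurd (by rw [srefl_fix hq] : srefl M k v = v) (by intro h; rw [h] at hd; omega)
  · exact hq

theorem dep_srefl_lt {M : CoxM I} (hs : M.Small) {v : I → ℝ} (hv : IsRoot M v)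
    (hp : ∀ l, 0 ≤ v l) {i : I} (hq : 0 < bform M v (sroot i)) :
    dep M (srefl M i v) < dep M v := by
  have hn : 1 ≤ dep M v := dep_pos hs hv hp
  obtain ⟨w, hw, l₀, hl₀⟩ := dep_witness hs hv
  by_cases hneg : ∀ l, 0 ≤ rho M hs w (sroot i) l
  · -- first-letter decomposition
    have hw1 : w ≠ 1 := by
      intro h
      rw [h, (csys M).length_one] at hw
      omega
    obtain ⟨k, hk⟩ := (csys M).exists_leftDescent_of_ne_one hw1
    have hk' : (csys M).length ((csys M).simple k * w) < (csys M).length w := hk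
    have hk2 : (csys M).length ((csys M).simple k * w) + 1 = (csys M).length w := by
      rcases (csys M).length_simple_mul w k with h | h <;> omega
    have hcan : (csys M).simple k * ((csys M).simple k * w) = w := by
      rw [← mul_assoc, (csys M).simple_mul_simple_self, one_mul]
    have hγroot : IsRoot M (rho M hs ((csys M).simple k * w) v) :=
      isRoot_rho hs _ hv
    have hγpos : ∀ l, 0 ≤ rho M hs ((csys M).simple k * w) v l :=
      dep_pos_of_lt hs _ (by omega)
    have hγbad : ∃ l, srefl M k (rho M hs ((csys M).simple k * w) v) l < 0 := by
      refine ⟨l₀, ?_⟩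
      rw [← rho_simple_apply M hs k, ← rho_mul_apply, hcan]
      exact hl₀
    have hγ : rho M hs ((csys M).simple k * w) v = sroot k :=
      eq_sroot_of_bad hs hγroot hγpos hγbad
    by_cases hδ : ∀ l, 0 ≤ rho M hs ((csys M).simple k * w) (sroot i) l
    · by_cases hδk : rho M hs ((csys M).simple k * w) (sroot i) = sroot k
      · -- v = sroot i
        have hvi : v = sroot i := by
          have e := hγ.trans hδk.symm
          have := congrArg (rho M hs ((csys M).simple k * w)⁻¹) e
          rwa [← rho_mul_apply, ← rho_mul_apply, inv_mul_cancel, map_one,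
            Module.End.one_apply, Module.End.one_apply] at this
        have hbad1 : rho M hs 1 (srefl M i v) i < 0 := by
          rw [map_one, Module.End.one_apply, hvi, srefl_sroot_self, Pi.neg_apply, sroot_self]
          norm_num
        have := dep_le hs 1 ⟨i, hbad1⟩
        rw [(csys M).length_one] at this
        omega
      · -- δ has a positive coordinate off k
        have hδroot : IsRoot M (rho M hs ((csys M).simple k * w) (sroot i)) :=
          isRoot_rho hs _ (IsRoot.simple i)
        have hex : ∃ l₁, l₁ ≠ k ∧ 0 < rho M hs ((csys M).simple k * w) (sroot i) l₁ := by
          by_contra hc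
          push_neg at hc
          refine hδk (root_single hδroot hδ fun l hl => ?_)
          have := hc l hl
          have := hδ l
          linarith
        obtain ⟨l₁, hl₁k, hl₁⟩ := hex
        have hbad2 : rho M hs ((csys M).simple k * w) (srefl M i v) l₁ < 0 := by
          have e : rho M hs ((csys M).simple k * w) (srefl M i v) l₁
              = rho M hs ((csys M).simple k * w) v l₁
                - bform M v (sroot i) * rho M hs ((csys M).simple k * w) (sroot i) l₁ := by
            rw [srefl_def, map_sub, map_smul, Pi.sub_apply, Pi.smul_apply, smul_eq_mul]
          rw [e, hγ, sroot_ne hl₁k]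
          nlinarith
        have := dep_le hs _ ⟨l₁, hbad2⟩
        omega
    · -- δ not nonnegative
      have hlt := desc_of_neg hs ((csys M).simple k * w) i hδ
      have hbad3 : rho M hs ((csys M).simple k * ((csys M).simple k * w * (csys M).simple i))
          (srefl M i v) k < 0 := by
        have e : rho M hs ((csys M).simple k * ((csys M).simple k * w * (csys M).simple i))
            (srefl M i v) = srefl M k (sroot k) := by
          rw [rho_mul_apply, rho_simple_apply, rho_simple_right, srefl_srefl, hγ]
        rw [e, srefl_sroot_self, Pi.neg_apply, sroot_self]
        norm_num
      have h4 := dep_le hs _ ⟨k, hbad3⟩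
      have h5 : (csys M).length ((csys M).simple k * ((csys M).simple k * w * (csys M).simple i))
          ≤ (csys M).length ((csys M).simple k * w * (csys M).simple i) + 1 := by
        rcases (csys M).length_simple_mul ((csys M).simple k * w * (csys M).simple i) k
          with h | h <;> omega
      omega
  · -- w itself descends along i
    have hlt := desc_of_neg hs w i hneg
    have hbad : rho M hs (w * (csys M).simple i) (srefl M i v) l₀ < 0 := by
      rw [rho_simple_right, srefl_srefl]
      exact hl₀
    have := dep_le hs _ ⟨l₀, hbad⟩
    omega

end Aux3
end LK
namespace LK
section Aux4
variable {I : Type} [Fintype I] [DecidableEq I]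

theorem neg_coord_of_dep_zero {M : CoxM I} (hs : M.Small) {v : I → ℝ} (hv : IsRoot M v)
    (h0 : dep M v = 0) : ∃ l, v l < 0 := by
  obtain ⟨w, hw, l, hl⟩ := dep_witness hs hv
  rw [h0] at hw
  have : w = 1 := (csys M).length_eq_zero_iff.mp hw
  subst this
  rw [map_one, Module.End.one_apply] at hl
  exact ⟨l, hl⟩

theorem tri_branch {M : CoxM I} (hs : M.Small) {x y z : I} (hxy : M.m x y = 3)
    (hxz : M.m x z = 3) {v : I → ℝ} (hv : IsRoot M v) (hp : ∀ l, 0 ≤ v l)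
    (hq : 0 < bform M v (sroot x))
    (hpos : 0 < bform M v (sroot x) + bform M v (sroot y) + bform M v (sroot z))
    (IH : ∀ u : I → ℝ, IsRoot M u → (∀ l, 0 ≤ u l) → dep M u < dep M v →
      bform M u (sroot x) + bform M u (sroot y) + bform M u (sroot z) ≤ 0) : False := by
  have hz : cf M x x + cf M x y + cf M x z = 0 := by
    rw [cf_diag, cf_three hxy, cf_three hxz]; norm_num
  have hd2 : dep M (srefl M x v) < dep M v := dep_srefl_lt hs hv hp hq
  have hroot2 : IsRoot M (srefl M x v) := IsRoot.srefl x v hv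
  rcases Nat.eq_zero_or_pos (dep M (srefl M x v)) with h0 | h1
  · obtain ⟨l, hl⟩ := neg_coord_of_dep_zero hs hroot2 h0
    have hvx : v = sroot x := eq_sroot_of_bad hs hv hp ⟨l, hl⟩
    rw [hvx, bform_sroot_sroot, bform_sroot_sroot, bform_sroot_sroot] at hpos
    linarith
  · have hp2 : ∀ l, 0 ≤ srefl M x v l := nonneg_of_dep_pos hs h1
    have hsum := IH (srefl M x v) hroot2 hp2 hd2
    rw [bform_srefl_left, bform_srefl_left, bform_srefl_left, bform_sroot_sroot,
      bform_sroot_sroot, bform_sroot_sroot] at hsum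
    nlinarith [hz, hpos, hq]

theorem tri {M : CoxM I} (hs : M.Small) {i j k : I} (hij : M.m i j = 3)
    (hik : M.m i k = 3) (hjk : M.m j k = 3) :
    ∀ (n : ℕ) (v : I → ℝ), dep M v = n → IsRoot M v → (∀ l, 0 ≤ v l) →
    bform M v (sroot i) + bform M v (sroot j) + bform M v (sroot k) ≤ 0 := by
  intro n
  induction n using Nat.strong_induction_on with
  | _ n IHn =>
  intro v hn hv hp
  by_contra hpos
  push_neg at hpos
  have IH : ∀ u : I → ℝ, IsRoot M u → (∀ l, 0 ≤ u l) → dep M u < dep M v →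
      bform M u (sroot i) + bform M u (sroot j) + bform M u (sroot k) ≤ 0 := by
    intro u hu hup hd
    exact IHn (dep M u) (by omega) u rfl hu hup
  have hone : 0 < bform M v (sroot i) ∨ 0 < bform M v (sroot j) ∨ 0 < bform M v (sroot k) := by
    by_contra h
    push_neg at h
    obtain ⟨h1, h2, h3⟩ := h
    linarith
  rcases hone with h | h | h
  · exact tri_branch hs hij hik hv hp h hpos IH
  · refine tri_branch hs (show M.m j i = 3 by rw [M.symm]; exact hij) hjk hv hp h
      (by linarith) (fun u hu hup hd => by have := IH u hu hup hd; linarith)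
  · refine tri_branch hs (show M.m k i = 3 by rw [M.symm]; exact hik)
      (show M.m k j = 3 by rw [M.symm]; exact hjk) hv hp h
      (by linarith) (fun u hu hup hd => by have := IH u hu hup hd; linarith)

end Aux4
end LK
namespace LK
section Aux5
variable {I : Type} [Fintype I] [DecidableEq I]

/-- The core of the induction step: the case `m i k = 3`, `m j k = 2`. -/
theorem case_core (M : CoxM I) (hsmall : M.Small)
    (R : Type) [CommRing R] (b c d : R) (hb : IsUnit b) (hc : IsUnit c) (hd : IsUnit d)
    (a : R) (f : I → (VV M R →ₗ[R] R))
    (rel6 : ∀ i j : I, M.m i j = 2 → ∀ aa bb : Pos M,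
      aa.1 = srefl M j bb.1 → dep M aa.1 = dep M bb.1 + 1 →
      d * f i (ev M R aa) = b * f i (ev M R bb))
    (rel8 : ∀ i j : I, M.m i j = 3 → ∀ gg bb aa : Pos M,
      bb.1 = srefl M i gg.1 → aa.1 = srefl M j bb.1 →
      dep M gg.1 < dep M bb.1 → dep M bb.1 < dep M aa.1 →
      c * f i (ev M R aa) = b * f j (ev M R gg) - a * f i (ev M R bb))
    (rel10 : ∀ i j : I, M.m i j = 3 → ∀ gg bb aa : Pos M,
      bb.1 = srefl M j gg.1 → aa.1 = srefl M i bb.1 →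
      srefl M i gg.1 = gg.1 → srefl M j aa.1 = aa.1 →
      dep M gg.1 < dep M bb.1 → dep M bb.1 < dep M aa.1 →
      d * f i (ev M R aa) = b * f j (ev M R bb))
    (i j k : I) (h3 : M.m i j = 3) (hik3 : M.m i k = 3) (hjk2 : M.m j k = 2)
    (aa : Pos M)
    (hfi : srefl M i aa.1 = aa.1) (hfj : srefl M j aa.1 = aa.1)
    (hk : dep M (srefl M k aa.1) + 1 = dep M aa.1)
    (IH : ∀ (i' j' : I), M.m i' j' = 3 → ∀ bb : Pos M, dep M bb.1 < dep M aa.1 →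
      srefl M i' bb.1 = bb.1 → srefl M j' bb.1 = bb.1 →
      f i' (ev M R bb) = f j' (ev M R bb)) :
    f i (ev M R aa) = f j (ev M R aa) := by
  have pI : bform M aa.1 (sroot i) = 0 := fix_bform hfi
  have pJ : bform M aa.1 (sroot j) = 0 := fix_bform hfj
  have hq : 0 < bform M aa.1 (sroot k) :=
    bform_pos_of_descent hsmall aa.2.1 aa.2.2 (by omega)
  have cIJ : cf M i j = -1 := cf_three h3
  have cJI : cf M j i = -1 := cf_three (by rw [M.symm]; exact h3)
  have cIK : cf M i k = -1 := cf_three hik3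
  have cKI : cf M k i = -1 := cf_three (by rw [M.symm]; exact hik3)
  have cJK : cf M j k = 0 := cf_two hjk2
  have cKJ : cf M k j = 0 := cf_two (by rw [M.symm]; exact hjk2)
  -- the root β = s_k α
  have hβroot : IsRoot M (srefl M k aa.1) := IsRoot.srefl k aa.1 aa.2.1
  have BβI : bform M (srefl M k aa.1) (sroot i) = bform M aa.1 (sroot k) := by
    rw [bform_srefl_left, bform_sroot_sroot, pI, cKI]; ring
  have BβJ : bform M (srefl M k aa.1) (sroot j) = 0 := by
    rw [bform_srefl_left, bform_sroot_sroot, pJ, cKJ]; ring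
  have BβK : bform M (srefl M k aa.1) (sroot k) = -(bform M aa.1 (sroot k)) := by
    rw [bform_srefl_left, bform_sroot_sroot, cf_diag]; ring
  have hβfixJ : srefl M j (srefl M k aa.1) = srefl M k aa.1 := srefl_fix BβJ
  have hβd1 : 1 ≤ dep M (srefl M k aa.1) := by
    rcases Nat.eq_zero_or_pos (dep M (srefl M k aa.1)) with h0 | h1
    · exfalso
      obtain ⟨l, hl⟩ := neg_coord_of_dep_zero hsmall hβroot h0
      have hak : aa.1 = sroot k := eq_sroot_of_bad hsmall aa.2.1 aa.2.2 ⟨l, hl⟩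
      rw [hak, bform_sroot_sroot, cKI] at pI
      norm_num at pI
    · exact h1
  have hβpos : ∀ l, 0 ≤ srefl M k aa.1 l := nonneg_of_dep_pos hsmall hβd1
  -- the root γ = s_i β
  have hγroot : IsRoot M (srefl M i (srefl M k aa.1)) := IsRoot.srefl i _ hβroot
  have hγlt : dep M (srefl M i (srefl M k aa.1)) < dep M (srefl M k aa.1) :=
    dep_srefl_lt hsmall hβroot hβpos (by rw [BβI]; exact hq)
  have hγle := dep_le_succ hsmall hβroot i
  have BγI : bform M (srefl M i (srefl M k aa.1)) (sroot i) = -(bform M aa.1 (sroot k)) := by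
    rw [bform_srefl_left, BβI, bform_sroot_sroot, cf_diag]; ring
  have BγJ : bform M (srefl M i (srefl M k aa.1)) (sroot j) = bform M aa.1 (sroot k) := by
    rw [bform_srefl_left, BβJ, BβI, bform_sroot_sroot, cIJ]; ring
  have BγK : bform M (srefl M i (srefl M k aa.1)) (sroot k) = 0 := by
    rw [bform_srefl_left, BβK, BβI, bform_sroot_sroot, cIK]; ring
  have hγfixK : srefl M k (srefl M i (srefl M k aa.1)) = srefl M i (srefl M k aa.1) :=
    srefl_fix BγK
  have hγd1 : 1 ≤ dep M (srefl M i (srefl M k aa.1)) := by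
    rcases Nat.eq_zero_or_pos (dep M (srefl M i (srefl M k aa.1))) with h0 | h1
    · exfalso
      obtain ⟨l, hl⟩ := neg_coord_of_dep_zero hsmall hγroot h0
      have hbi : srefl M k aa.1 = sroot i := eq_sroot_of_bad hsmall hβroot hβpos ⟨l, hl⟩
      rw [hbi, bform_sroot_sroot, cIJ] at BβJ
      norm_num at BβJ
    · exact h1
  have hγpos : ∀ l, 0 ≤ srefl M i (srefl M k aa.1) l := nonneg_of_dep_pos hsmall hγd1
  -- the root δ = s_j γ
  have hδroot : IsRoot M (srefl M j (srefl M i (srefl M k aa.1))) := IsRoot.srefl j _ hγroot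
  have hδlt : dep M (srefl M j (srefl M i (srefl M k aa.1)))
      < dep M (srefl M i (srefl M k aa.1)) :=
    dep_srefl_lt hsmall hγroot hγpos (by rw [BγJ]; exact hq)
  have hδle := dep_le_succ hsmall hγroot j
  have BδI : bform M (srefl M j (srefl M i (srefl M k aa.1))) (sroot i) = 0 := by
    rw [bform_srefl_left, BγI, BγJ, bform_sroot_sroot, cJI]; ring
  have BδK : bform M (srefl M j (srefl M i (srefl M k aa.1))) (sroot k) = 0 := by
    rw [bform_srefl_left, BγK, BγJ, bform_sroot_sroot, cJK]; ring
  have hδfixI : srefl M i (srefl M j (srefl M i (srefl M k aa.1)))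
      = srefl M j (srefl M i (srefl M k aa.1)) := srefl_fix BδI
  have hδfixK : srefl M k (srefl M j (srefl M i (srefl M k aa.1)))
      = srefl M j (srefl M i (srefl M k aa.1)) := srefl_fix BδK
  have hδd1 : 1 ≤ dep M (srefl M j (srefl M i (srefl M k aa.1))) := by
    rcases Nat.eq_zero_or_pos (dep M (srefl M j (srefl M i (srefl M k aa.1)))) with h0 | h1
    · exfalso
      obtain ⟨l, hl⟩ := neg_coord_of_dep_zero hsmall hδroot h0
      have hgj : srefl M i (srefl M k aa.1) = sroot j :=
        eq_sroot_of_bad hsmall hγroot hγpos ⟨l, hl⟩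
      rw [hgj, bform_sroot_sroot, cJI] at BγI
      rw [hgj, bform_sroot_sroot, cf_diag] at BγJ
      linarith
    · exact h1
  have hδpos : ∀ l, 0 ≤ srefl M j (srefl M i (srefl M k aa.1)) l :=
    nonneg_of_dep_pos hsmall hδd1
  -- relations
  have relA := rel6 j k hjk2 aa ⟨srefl M k aa.1, hβroot, hβpos⟩
    (srefl_srefl M k aa.1).symm
    (by show dep M aa.1 = dep M (srefl M k aa.1) + 1; omega)
  have relB := rel8 i k hik3 ⟨srefl M i (srefl M k aa.1), hγroot, hγpos⟩
    ⟨srefl M k aa.1, hβroot, hβpos⟩ aa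
    (srefl_srefl M i (srefl M k aa.1)).symm
    (srefl_srefl M k aa.1).symm
    hγlt
    (by show dep M (srefl M k aa.1) < dep M aa.1; omega)
  have relD := rel10 i j h3 ⟨srefl M j (srefl M i (srefl M k aa.1)), hδroot, hδpos⟩
    ⟨srefl M i (srefl M k aa.1), hγroot, hγpos⟩ ⟨srefl M k aa.1, hβroot, hβpos⟩
    (srefl_srefl M j (srefl M i (srefl M k aa.1))).symm
    (srefl_srefl M i (srefl M k aa.1)).symm
    hδfixI hβfixJ hδlt hγlt
  have relF := rel8 j i (by rw [M.symm]; exact h3)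
    ⟨srefl M j (srefl M i (srefl M k aa.1)), hδroot, hδpos⟩
    ⟨srefl M i (srefl M k aa.1), hγroot, hγpos⟩ ⟨srefl M k aa.1, hβroot, hβpos⟩
    (srefl_srefl M j (srefl M i (srefl M k aa.1))).symm
    (srefl_srefl M i (srefl M k aa.1)).symm
    hδlt hγlt
  have relG := rel6 k j (by rw [M.symm]; exact hjk2)
    ⟨srefl M i (srefl M k aa.1), hγroot, hγpos⟩
    ⟨srefl M j (srefl M i (srefl M k aa.1)), hδroot, hδpos⟩
    (srefl_srefl M j (srefl M i (srefl M k aa.1))).symm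
    (by show dep M (srefl M i (srefl M k aa.1))
          = dep M (srefl M j (srefl M i (srefl M k aa.1))) + 1; omega)
  have u_eq := IH i k hik3 ⟨srefl M j (srefl M i (srefl M k aa.1)), hδroot, hδpos⟩
    (by show dep M (srefl M j (srefl M i (srefl M k aa.1))) < dep M aa.1; omega)
    hδfixI hδfixK
  refine (hc.mul hd).mul_left_cancel ?_
  calc c * d * f i (ev M R aa)
      = d * (c * f i (ev M R aa)) := by ring
    _ = d * (b * f k (ev M R ⟨srefl M i (srefl M k aa.1), hγroot, hγpos⟩)
          - a * f i (ev M R ⟨srefl M k aa.1, hβroot, hβpos⟩)) := by rw [relB]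
    _ = b * (d * f k (ev M R ⟨srefl M i (srefl M k aa.1), hγroot, hγpos⟩))
          - a * (d * f i (ev M R ⟨srefl M k aa.1, hβroot, hβpos⟩)) := by ring
    _ = b * (b * f k (ev M R ⟨srefl M j (srefl M i (srefl M k aa.1)), hδroot, hδpos⟩))
          - a * (b * f j (ev M R ⟨srefl M i (srefl M k aa.1), hγroot, hγpos⟩)) := by
        rw [relG, relD]
    _ = b * (b * f i (ev M R ⟨srefl M j (srefl M i (srefl M k aa.1)), hδroot, hδpos⟩)
          - a * f j (ev M R ⟨srefl M i (srefl M k aa.1), hγroot, hγpos⟩)) := by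
        rw [u_eq]; ring
    _ = b * (c * f j (ev M R ⟨srefl M k aa.1, hβroot, hβpos⟩)) := by rw [relF]
    _ = c * (b * f j (ev M R ⟨srefl M k aa.1, hβroot, hβpos⟩)) := by ring
    _ = c * (d * f j (ev M R aa)) := by rw [← relA]
    _ = c * d * f j (ev M R aa) := by ring

end Aux5
end LK
open LK in
/-- relation (5) follows from relations (1), (6), (8) and (10). -/
theorem statement_9 {I : Type} [Fintype I] [DecidableEq I] (M : CoxM I) (hsmall : M.Small)
    (R : Type) [CommRing R] (b c d : R) (hb : IsUnit b) (hc : IsUnit c) (hd : IsUnit d)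
    (a : R) (ha : a = d - b * c * Ring.inverse d)
    (f : I → (VV M R →ₗ[R] R))
    (rel1 : ∀ i j : I, i ≠ j → f i (ev M R (simplePos M j)) = 0)
    (rel6 : ∀ i j : I, M.m i j = 2 → ∀ aa bb : Pos M,
      aa.1 = srefl M j bb.1 → dep M aa.1 = dep M bb.1 + 1 →
      d * f i (ev M R aa) = b * f i (ev M R bb))
    (rel8 : ∀ i j : I, M.m i j = 3 → ∀ gg bb aa : Pos M,
      bb.1 = srefl M i gg.1 → aa.1 = srefl M j bb.1 →
      dep M gg.1 < dep M bb.1 → dep M bb.1 < dep M aa.1 →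
      c * f i (ev M R aa) = b * f j (ev M R gg) - a * f i (ev M R bb))
    (rel10 : ∀ i j : I, M.m i j = 3 → ∀ gg bb aa : Pos M,
      bb.1 = srefl M j gg.1 → aa.1 = srefl M i bb.1 →
      srefl M i gg.1 = gg.1 → srefl M j aa.1 = aa.1 →
      dep M gg.1 < dep M bb.1 → dep M bb.1 < dep M aa.1 →
      d * f i (ev M R aa) = b * f j (ev M R bb)) :
    ∀ i j : I, M.m i j = 3 → ∀ aa : Pos M,
      srefl M i aa.1 = aa.1 → srefl M j aa.1 = aa.1 →
      f i (ev M R aa) = f j (ev M R aa) := by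
  suffices key : ∀ n : ℕ, ∀ i j : I, M.m i j = 3 → ∀ aa : Pos M, dep M aa.1 = n →
      srefl M i aa.1 = aa.1 → srefl M j aa.1 = aa.1 →
      f i (ev M R aa) = f j (ev M R aa) by
    exact fun i j h3 aa hi hj => key (dep M aa.1) i j h3 aa rfl hi hj
  intro n
  induction n using Nat.strong_induction_on with
  | _ n IHn =>
  intro i j h3 aa hdep hfi hfj
  have IH : ∀ (i' j' : I), M.m i' j' = 3 → ∀ bb : Pos M, dep M bb.1 < dep M aa.1 →
      srefl M i' bb.1 = bb.1 → srefl M j' bb.1 = bb.1 →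
      f i' (ev M R bb) = f j' (ev M R bb) := by
    intro i' j' h3' bb hlt hfi' hfj'
    exact IHn (dep M bb.1) (by omega) i' j' h3' bb rfl hfi' hfj'
  have pI : bform M aa.1 (sroot i) = 0 := fix_bform hfi
  have pJ : bform M aa.1 (sroot j) = 0 := fix_bform hfj
  have hn1 : 1 ≤ dep M aa.1 := dep_pos hsmall aa.2.1 aa.2.2
  obtain ⟨k, hk⟩ := descent_exists hsmall aa.2.1 hn1
  have hq : 0 < bform M aa.1 (sroot k) :=
    bform_pos_of_descent hsmall aa.2.1 aa.2.2 (by omega)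
  have hki : i ≠ k := by
    rintro rfl
    rw [pI] at hq
    exact lt_irrefl _ hq
  have hkj : j ≠ k := by
    rintro rfl
    rw [pJ] at hq
    exact lt_irrefl _ hq
  rcases Nat.lt_or_ge (dep M aa.1) 2 with hlow | hn2
  · -- depth 1 : aa is a simple root
    obtain ⟨m, hm⟩ := dep_one_simple hsmall aa.2.1 aa.2.2 (by omega)
    have him : i ≠ m := by
      rintro rfl
      rw [hm, bform_sroot_sroot, cf_diag] at pI
      norm_num at pI
    have hjm : j ≠ m := by
      rintro rfl
      rw [hm, bform_sroot_sroot, cf_diag] at pJ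
      norm_num at pJ
    have haa : aa = simplePos M m := Subtype.ext hm
    rw [haa, rel1 i m him, rel1 j m hjm]
  · -- depth at least 2
    rcases m_cases hsmall hki with hik2 | hik3 <;> rcases m_cases hsmall hkj with hjk2 | hjk3
    · -- both commute : use the induction hypothesis on β
      have hβroot : IsRoot M (srefl M k aa.1) := IsRoot.srefl k aa.1 aa.2.1
      have hβd1 : 1 ≤ dep M (srefl M k aa.1) := by omega
      have hβpos : ∀ l, 0 ≤ srefl M k aa.1 l := nonneg_of_dep_pos hsmall hβd1
      have cKI : cf M k i = 0 := cf_two (by rw [M.symm]; exact hik2)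
      have cKJ : cf M k j = 0 := cf_two (by rw [M.symm]; exact hjk2)
      have BβI : bform M (srefl M k aa.1) (sroot i) = 0 := by
        rw [bform_srefl_left, bform_sroot_sroot, pI, cKI]; ring
      have BβJ : bform M (srefl M k aa.1) (sroot j) = 0 := by
        rw [bform_srefl_left, bform_sroot_sroot, pJ, cKJ]; ring
      have hIH := IH i j h3 ⟨srefl M k aa.1, hβroot, hβpos⟩
        (by show dep M (srefl M k aa.1) < dep M aa.1; omega)
        (srefl_fix BβI) (srefl_fix BβJ)
      have relI := rel6 i k hik2 aa ⟨srefl M k aa.1, hβroot, hβpos⟩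
        (srefl_srefl M k aa.1).symm
        (by show dep M aa.1 = dep M (srefl M k aa.1) + 1; omega)
      have relJ := rel6 j k hjk2 aa ⟨srefl M k aa.1, hβroot, hβpos⟩
        (srefl_srefl M k aa.1).symm
        (by show dep M aa.1 = dep M (srefl M k aa.1) + 1; omega)
      refine hd.mul_left_cancel ?_
      rw [relI, relJ, hIH]
    · -- m i k = 2, m j k = 3 : symmetric core case
      exact (case_core M hsmall R b c d hb hc hd a f rel6 rel8 rel10 j i k
        (by rw [M.symm]; exact h3) hjk3 hik2 aa hfj hfi hk
        (fun i' j' h3' bb hlt hfi' hfj' => IH i' j' h3' bb hlt hfi' hfj')).symm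
    · -- m i k = 3, m j k = 2 : core case
      exact case_core M hsmall R b c d hb hc hd a f rel6 rel8 rel10 i j k
        h3 hik3 hjk2 aa hfi hfj hk
        (fun i' j' h3' bb hlt hfi' hfj' => IH i' j' h3' bb hlt hfi' hfj')
    · -- triangle : impossible
      exfalso
      have := tri hsmall h3 hik3 hjk3 (dep M aa.1) aa.1 rfl aa.2.1 aa.2.2
      linarith
end
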